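/- arXiv:1312.7105 — 6 statements merged into one kernel-verified Lean document; each statement's English description precedes it below -/
import Mathlib

section
/- Let P_0, P_1 be polynomials of degree at most m, not both zero, such that the Padé remainder T(z) := P_0(z) + P_1(z) f(z) satisfies T(z) = O(z^{-m-1}) as z → ∞. Then for every polynomial p of degree at most m − 1 and every r > R, ∮_{|ζ|=r} P_1(ζ) p(ζ) f(ζ) dζ = 0. -/
open Metric


/-- Orthogonality of the Padé denominator: if `(P₀, P₁)` is a Padé pair of
order `m` for `f`, then `∮_{|ζ|=r} P₁(ζ) p(ζ) f(ζ) dζ = 0` for every polynomial `p` of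
degree at most `m - 1` and every `r > R`. -/
theorem stmt_2
    (R : ℝ) (hR : 0 < R) (f : ℂ → ℂ)
    (hf : DifferentiableOn ℂ f {z : ℂ | R < ‖z‖})
    (hinf : ∃ g : ℂ → ℂ, ∃ ε > (0 : ℝ), DifferentiableOn ℂ g (Metric.ball (0 : ℂ) ε) ∧
      ∀ w ∈ Metric.ball (0 : ℂ) ε, w ≠ 0 → g w = f w⁻¹)
    (m : ℕ) (P₀ P₁ : Polynomial ℂ)
    (hne : ¬(P₀ = 0 ∧ P₁ = 0))
    (hdeg₀ : P₀.natDegree ≤ m) (hdeg₁ : P₁.natDegree ≤ m)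
    (hrem : ∃ C R' : ℝ, ∀ z : ℂ, R' < ‖z‖ →
      ‖z ^ (m + 1) * (P₀.eval z + P₁.eval z * f z)‖ ≤ C) :
    ∀ p : Polynomial ℂ, p.degree < m → ∀ r : ℝ, R < r →
      (∮ ζ in C(0, r), P₁.eval ζ * p.eval ζ * f ζ) = 0 := by
  intro p hpm r hr
  have hr0 : (0:ℝ) < r := hR.trans hr
  by_cases hp : p = 0
  · simp [hp, circleIntegral]
  obtain ⟨C, R', hC⟩ := hrem
  set T : ℂ → ℂ := fun z => P₀.eval z + P₁.eval z * f z with hT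
  set g : ℂ → ℂ := fun z => p.eval z * T z with hg
  set n := p.natDegree with hn
  have hnm : n < m := (Polynomial.natDegree_lt_iff_degree_lt hp).2 hpm
  set D : ℝ := ∑ i ∈ Finset.range (n+1), ‖p.coeff i‖ with hD
  have hD0 : 0 ≤ D := Finset.sum_nonneg fun i _ => norm_nonneg _
  have hpoly : ∀ z : ℂ, 1 ≤ ‖z‖ → ‖p.eval z‖ ≤ D * ‖z‖ ^ n := by
    intro z hz
    rw [Polynomial.eval_eq_sum_range]
    calc ‖∑ i ∈ Finset.range (n+1), p.coeff i * z ^ i‖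
        ≤ ∑ i ∈ Finset.range (n+1), ‖p.coeff i * z ^ i‖ := norm_sum_le _ _
      _ ≤ ∑ i ∈ Finset.range (n+1), ‖p.coeff i‖ * ‖z‖ ^ n := by
          refine Finset.sum_le_sum fun i hi => ?_
          rw [norm_mul, norm_pow]
          exact mul_le_mul_of_nonneg_left
            (pow_le_pow_right₀ hz (Nat.lt_succ_iff.1 (Finset.mem_range.1 hi)))
            (norm_nonneg _)
      _ = D * ‖z‖ ^ n := by rw [← Finset.sum_mul]
  have hopen : IsOpen {z : ℂ | R < ‖z‖} := isOpen_lt continuous_const continuous_norm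
  have hTd : DifferentiableOn ℂ T {z : ℂ | R < ‖z‖} :=
    (P₀.differentiable.differentiableOn).add ((P₁.differentiable.differentiableOn).mul hf)
  have hgd : DifferentiableOn ℂ g {z : ℂ | R < ‖z‖} :=
    (p.differentiable.differentiableOn).mul hTd
  have hsub : ∀ s : ℝ, R < s → Metric.sphere (0:ℂ) s ⊆ {z : ℂ | R < ‖z‖} := by
    intro s hs z hz
    rw [mem_sphere_zero_iff_norm] at hz
    rw [Set.mem_setOf_eq, hz]; exact hs
  have hg_int : CircleIntegrable g 0 r :=
    ((hgd.continuousOn).mono (hsub r hr)).circleIntegrable hr0.le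
  have hh_int : CircleIntegrable (fun z => Polynomial.eval z p * Polynomial.eval z P₀) 0 r :=
    ((p.continuous.mul P₀.continuous).continuousOn).circleIntegrable hr0.le
  have hsplit : (∮ ζ in C(0, r), P₁.eval ζ * p.eval ζ * f ζ)
      = (∮ ζ in C(0, r), g ζ) - ∮ ζ in C(0, r), p.eval ζ * P₀.eval ζ := by
    rw [← circleIntegral.integral_sub hg_int hh_int]
    refine circleIntegral.integral_congr hr0.le fun z hz => ?_
    simp only [hg, hT]
    ring
  have hpoly_zero : (∮ ζ in C(0, r), p.eval ζ * P₀.eval ζ) = 0 := by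
    refine Complex.circleIntegral_eq_zero_of_differentiable_on_off_countable hr0.le
      Set.countable_empty ((p.continuous.mul P₀.continuous).continuousOn) fun z _ => ?_
    exact (p.differentiable.mul P₀.differentiable).differentiableAt
  rw [hsplit, hpoly_zero, sub_zero]
  set I := ∮ ζ in C(0, r), g ζ with hI
  set M : ℝ := max (max r (R' + 1)) 1 with hM
  have hIr' : ∀ r', M ≤ r' → I = ∮ ζ in C(0, r'), g ζ := by
    intro r' hr'
    have hrr' : r ≤ r' := le_trans (le_max_of_le_left (le_max_left _ _)) hr'
    refine (Complex.circleIntegral_eq_of_differentiable_on_annulus_off_countable hr0 hrr'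
      Set.countable_empty ?_ ?_).symm
    · refine hgd.continuousOn.mono fun z hz => ?_
      have h1 : r ≤ ‖z‖ := not_lt.1 (mt mem_ball_zero_iff.2 hz.2)
      exact lt_of_lt_of_le hr h1
    · intro z hz
      have h1 : r < ‖z‖ := not_le.1 (mt mem_closedBall_zero_iff.2 hz.1.2)
      exact hgd.differentiableAt (hopen.mem_nhds (hr.trans h1))
  have hbound : ∀ r', M ≤ r' → ‖I‖ ≤ 2 * Real.pi * (D * |C|) / r' := by
    intro r' hr'
    have hr'1 : (1:ℝ) ≤ r' := le_trans (le_max_right _ _) hr'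
    have hr'0 : (0:ℝ) < r' := lt_of_lt_of_le one_pos hr'1
    have hR'lt : R' < r' := by
      have : R' + 1 ≤ M := le_max_of_le_left (le_max_right _ _)
      linarith [le_trans this hr']
    have hb : ∀ z ∈ Metric.sphere (0:ℂ) r', ‖g z‖ ≤ D * |C| / r' ^ 2 := by
      intro z hz
      rw [mem_sphere_zero_iff_norm] at hz
      have hTz : ‖T z‖ * r' ^ (m+1) ≤ |C| := by
        have h := hC z (by rw [hz]; exact hR'lt)
        rw [norm_mul, norm_pow, hz] at h
        calc ‖T z‖ * r' ^ (m+1) = r' ^ (m+1) * ‖T z‖ := mul_comm _ _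
          _ ≤ C := h
          _ ≤ |C| := le_abs_self C
      have hTz0 : (0:ℝ) ≤ ‖T z‖ := norm_nonneg _
      rw [le_div_iff₀ (by positivity)]
      have h1 : ‖p.eval z‖ ≤ D * r' ^ n := by
        have := hpoly z (by rw [hz]; exact hr'1); rwa [hz] at this
      have h2 : r' ^ (n+2) ≤ r' ^ (m+1) := pow_le_pow_right₀ hr'1 (by omega)
      calc ‖g z‖ * r' ^ 2 = ‖p.eval z‖ * (‖T z‖ * r' ^ 2) := by
            rw [hg]; rw [norm_mul]; ring
        _ ≤ (D * r' ^ n) * (‖T z‖ * r' ^ 2) := mul_le_mul_of_nonneg_right h1 (by positivity)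
        _ = D * (‖T z‖ * r' ^ (n+2)) := by ring
        _ ≤ D * (‖T z‖ * r' ^ (m+1)) :=
            mul_le_mul_of_nonneg_left (mul_le_mul_of_nonneg_left h2 hTz0) hD0
        _ ≤ D * |C| := mul_le_mul_of_nonneg_left hTz hD0
    rw [hIr' r' hr']
    calc ‖∮ ζ in C(0, r'), g ζ‖ ≤ 2 * Real.pi * r' * (D * |C| / r' ^ 2) :=
          circleIntegral.norm_integral_le_of_norm_le_const hr'0.le hb
      _ = 2 * Real.pi * (D * |C|) / r' := by field_simp
  have hlim : Filter.Tendsto (fun r' : ℝ => 2 * Real.pi * (D * |C|) / r')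
      Filter.atTop (nhds 0) := tendsto_const_nhds.div_atTop Filter.tendsto_id
  have hle : ‖I‖ ≤ 0 := ge_of_tendsto hlim ((Filter.eventually_ge_atTop M).mono hbound)
  exact norm_le_zero_iff.1 hle
end

section
/- Let Q_{n,0}, Q_{n,1}, Q_{n,2} be Hermite–Padé polynomials of order n for (1, f, f^2), and for each j with 1 ≤ j ≤ n let (P_{n+j,0}, P_{n+j,1}) be a Padé pair of order n + j for f. Then for every r > R and every j = 1, …, n, ∮_{|ζ|=r} Q_{n,2}(ζ) f(ζ)^2 P_{n+j,1}(ζ) dζ = 0. -/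
open Metric Set

/-- Polynomial growth bound. -/
lemma poly_bound (P : Polynomial ℂ) (d : ℕ) (hd : P.natDegree ≤ d) :
    ∃ M : ℝ, 0 ≤ M ∧ ∀ z : ℂ, 1 ≤ ‖z‖ → ‖P.eval z‖ ≤ M * ‖z‖ ^ d := by
  refine ⟨∑ i ∈ Finset.range (P.natDegree + 1), ‖P.coeff i‖,
    Finset.sum_nonneg fun _ _ => norm_nonneg _, fun z hz => ?_⟩
  rw [Polynomial.eval_eq_sum_range]
  calc ‖∑ i ∈ Finset.range (P.natDegree + 1), P.coeff i * z ^ i‖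
      ≤ ∑ i ∈ Finset.range (P.natDegree + 1), ‖P.coeff i * z ^ i‖ := norm_sum_le _ _
    _ ≤ ∑ i ∈ Finset.range (P.natDegree + 1), ‖P.coeff i‖ * ‖z‖ ^ d := by
        refine Finset.sum_le_sum fun i hi => ?_
        rw [norm_mul, norm_pow]
        exact mul_le_mul_of_nonneg_left
          (pow_le_pow_right₀ hz (Nat.le_trans (Nat.lt_succ_iff.mp (Finset.mem_range.mp hi)) hd))
          (norm_nonneg _)
    _ = (∑ i ∈ Finset.range (P.natDegree + 1), ‖P.coeff i‖) * ‖z‖ ^ d := by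
        rw [Finset.sum_mul]

/-- If `g` is holomorphic on `{R < ‖z‖}` and decays like `C/‖z‖²`, its circle integrals vanish. -/
lemma circleIntegral_eq_zero_of_decay (R : ℝ) (g : ℂ → ℂ)
    (hg : DifferentiableOn ℂ g {z : ℂ | R < ‖z‖})
    (C R' : ℝ) (hC : 0 ≤ C)
    (h : ∀ z : ℂ, R' < ‖z‖ → ‖g z‖ * ‖z‖ ^ 2 ≤ C)
    (r : ℝ) (hRr : R < r) (hr : 0 < r) :
    (∮ ζ in C(0, r), g ζ) = 0 := by
  have hopen : IsOpen {z : ℂ | R < ‖z‖} := isOpen_lt continuous_const continuous_norm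
  -- same integral on every larger circle
  have key : ∀ r' : ℝ, r ≤ r' → (∮ ζ in C(0, r'), g ζ) = ∮ ζ in C(0, r), g ζ := by
    intro r' hr'
    refine Complex.circleIntegral_eq_of_differentiable_on_annulus_off_countable hr hr'
      Set.countable_empty ?_ ?_
    · refine (hg.continuousOn).mono fun z hz => ?_
      simp only [mem_diff, mem_closedBall, mem_ball, Complex.dist_eq, sub_zero, not_lt] at hz
      exact lt_of_lt_of_le hRr (by simpa using hz.2)
    · intro z hz
      simp only [mem_diff, mem_ball, mem_closedBall, Complex.dist_eq, sub_zero, not_le] at hz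
      exact hg.differentiableAt (hopen.mem_nhds (lt_trans hRr (by simpa using hz.1.2)))
  set K := ∮ ζ in C(0, r), g ζ with hK
  have bound : ∀ r' : ℝ, max r (max R' 1) + 1 ≤ r' → ‖K‖ ≤ 2 * Real.pi * C / r' := by
    intro r' hr'
    have h1 : r ≤ r' := le_trans (le_trans (le_max_left _ _) (le_add_of_nonneg_right zero_le_one)) hr'
    have hR'lt : R' < r' :=
      lt_of_lt_of_le (lt_of_le_of_lt (le_trans (le_max_left _ _) (le_max_right r _))
        (lt_add_one _)) hr'
    have h1r' : (1 : ℝ) ≤ r' :=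
      le_trans (le_trans (le_trans (le_max_right _ _) (le_max_right r _))
        (le_add_of_nonneg_right zero_le_one)) hr'
    have hr'pos : (0 : ℝ) < r' := lt_of_lt_of_le one_pos h1r'
    rw [← key r' h1]
    have hb : ∀ z ∈ sphere (0 : ℂ) r', ‖g z‖ ≤ C / r' ^ 2 := by
      intro z hz
      have hz' : ‖z‖ = r' := by simpa [Complex.dist_eq] using hz
      have := h z (hz' ▸ hR'lt)
      rw [hz'] at this
      rw [le_div_iff₀ (by positivity)]
      exact this
    calc ‖∮ ζ in C(0, r'), g ζ‖ ≤ 2 * Real.pi * r' * (C / r' ^ 2) :=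
          circleIntegral.norm_integral_le_of_norm_le_const hr'pos.le hb
      _ = 2 * Real.pi * C / r' := by field_simp
  have hten : Filter.Tendsto (fun r' : ℝ => 2 * Real.pi * C / r') Filter.atTop (nhds 0) := by
    simpa [div_eq_mul_inv] using tendsto_inv_atTop_zero.const_mul (2 * Real.pi * C)
  have hle : ‖K‖ ≤ 0 :=
    ge_of_tendsto hten (Filter.eventually_atTop.mpr ⟨max r (max R' 1) + 1, bound⟩)
  exact norm_le_zero_iff.mp hle

/-- Combining the Hermite–Padé orthogonality relations with Padé pairs of
orders `n + j` (`1 ≤ j ≤ n`) yields `∮_{|ζ|=r} Q₂(ζ) f(ζ)² P_{n+j,1}(ζ) dζ = 0`. -/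
theorem stmt_3
    (R : ℝ) (hR : 0 < R) (f : ℂ → ℂ)
    (hf : DifferentiableOn ℂ f {z : ℂ | R < ‖z‖})
    (hinf : ∃ g : ℂ → ℂ, ∃ ε > (0 : ℝ), DifferentiableOn ℂ g (Metric.ball (0 : ℂ) ε) ∧
      ∀ w ∈ Metric.ball (0 : ℂ) ε, w ≠ 0 → g w = f w⁻¹)
    (n : ℕ) (Q₀ Q₁ Q₂ : Polynomial ℂ)
    (hne : ¬(Q₀ = 0 ∧ Q₁ = 0 ∧ Q₂ = 0))
    (hdeg₀ : Q₀.natDegree ≤ n) (hdeg₁ : Q₁.natDegree ≤ n) (hdeg₂ : Q₂.natDegree ≤ n)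
    (hrem : ∃ C R' : ℝ, ∀ z : ℂ, R' < ‖z‖ →
      ‖z ^ (2 * n + 2) * (Q₀.eval z + Q₁.eval z * f z + Q₂.eval z * (f z) ^ 2)‖ ≤ C)
    (P₀ P₁ : ℕ → Polynomial ℂ)
    (hP : ∀ j : ℕ, 1 ≤ j → j ≤ n →
      ¬(P₀ j = 0 ∧ P₁ j = 0) ∧
      (P₀ j).natDegree ≤ n + j ∧ (P₁ j).natDegree ≤ n + j ∧
      ∃ C R' : ℝ, ∀ z : ℂ, R' < ‖z‖ →
        ‖z ^ (n + j + 1) * ((P₀ j).eval z + (P₁ j).eval z * f z)‖ ≤ C) :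
    ∀ r : ℝ, R < r → ∀ j : ℕ, 1 ≤ j → j ≤ n →
      (∮ ζ in C(0, r), Q₂.eval ζ * (f ζ) ^ 2 * (P₁ j).eval ζ) = 0 := by
  intro r hr j hj1 hjn
  obtain ⟨C, R', hS⟩ := hrem
  obtain ⟨-, hPdeg₀, hPdeg₁, Cj, Rj, hT⟩ := hP j hj1 hjn
  have hr0 : (0 : ℝ) < r := lt_trans hR hr
  -- notation
  set S : ℂ → ℂ := fun z => Q₀.eval z + Q₁.eval z * f z + Q₂.eval z * (f z) ^ 2 with hSdef
  set T : ℂ → ℂ := fun z => (P₀ j).eval z + (P₁ j).eval z * f z with hTdef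
  set g₁ : ℂ → ℂ := fun z => (P₁ j).eval z * S z with hg₁def
  set g₂ : ℂ → ℂ := fun z => Q₁.eval z * T z with hg₂def
  set g₃ : ℂ → ℂ := fun z => Q₁.eval z * (P₀ j).eval z - Q₀.eval z * (P₁ j).eval z with hg₃def
  have hopen : IsOpen {z : ℂ | R < ‖z‖} := isOpen_lt continuous_const continuous_norm
  have hsub : Metric.sphere (0 : ℂ) r ⊆ {z : ℂ | R < ‖z‖} := by
    intro z hz
    have : ‖z‖ = r := by simpa [Complex.dist_eq] using hz
    rw [Set.mem_setOf_eq, this]; exact hr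
  -- differentiability
  have hg₁d : DifferentiableOn ℂ g₁ {z : ℂ | R < ‖z‖} :=
    (Polynomial.differentiable _).differentiableOn.mul
      (((Polynomial.differentiable _).differentiableOn.add
        ((Polynomial.differentiable _).differentiableOn.mul hf)).add
        ((Polynomial.differentiable _).differentiableOn.mul (hf.pow 2)))
  have hg₂d : DifferentiableOn ℂ g₂ {z : ℂ | R < ‖z‖} :=
    (Polynomial.differentiable _).differentiableOn.mul
      ((Polynomial.differentiable _).differentiableOn.add
        ((Polynomial.differentiable _).differentiableOn.mul hf))
  have hg₃d : Differentiable ℂ g₃ :=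
    ((Polynomial.differentiable _).mul (Polynomial.differentiable _)).sub
      ((Polynomial.differentiable _).mul (Polynomial.differentiable _))
  -- integrability
  have hi₁ : CircleIntegrable g₁ 0 r :=
    ((hg₁d.continuousOn).mono hsub).circleIntegrable hr0.le
  have hi₂ : CircleIntegrable g₂ 0 r :=
    ((hg₂d.continuousOn).mono hsub).circleIntegrable hr0.le
  have hi₃ : CircleIntegrable g₃ 0 r :=
    (hg₃d.continuous.continuousOn).circleIntegrable hr0.le
  have hi₂₃ : CircleIntegrable (fun ζ => g₂ ζ - g₃ ζ) 0 r :=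
    (((hg₂d.continuousOn).mono hsub).sub
      (hg₃d.continuous.continuousOn)).circleIntegrable hr0.le
  -- bounds
  obtain ⟨M₁, hM₁0, hM₁⟩ := poly_bound (P₁ j) (n + j) hPdeg₁
  obtain ⟨M₂, hM₂0, hM₂⟩ := poly_bound Q₁ n hdeg₁
  have hC0 : 0 ≤ C := by
    have hz : R' < ‖((max R' 0 + 1 : ℝ) : ℂ)‖ := by
      rw [Complex.norm_real, Real.norm_eq_abs, abs_of_pos (by positivity)]
      exact lt_of_le_of_lt (le_max_left _ _) (lt_add_one _)
    exact le_trans (norm_nonneg _) (hS _ hz)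
  have hCj0 : 0 ≤ Cj := by
    have hz : Rj < ‖((max Rj 0 + 1 : ℝ) : ℂ)‖ := by
      rw [Complex.norm_real, Real.norm_eq_abs, abs_of_pos (by positivity)]
      exact lt_of_le_of_lt (le_max_left _ _) (lt_add_one _)
    exact le_trans (norm_nonneg _) (hT _ hz)
  -- integral of g₁ vanishes
  have h1 : (∮ ζ in C(0, r), g₁ ζ) = 0 := by
    refine circleIntegral_eq_zero_of_decay R g₁ hg₁d (M₁ * C) (max R' 1) (by positivity)
      (fun z hz => ?_) r hr hr0
    have hA1 : (1 : ℝ) ≤ ‖z‖ := le_trans (le_max_right _ _) hz.le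
    have hAR : R' < ‖z‖ := lt_of_le_of_lt (le_max_left _ _) hz
    have hA0 : (0 : ℝ) < ‖z‖ := lt_of_lt_of_le one_pos hA1
    have hs' : ‖z‖ ^ (2 * n + 2) * ‖S z‖ ≤ C := by
      have := hS z hAR
      rwa [norm_mul, norm_pow] at this
    have e1 : ‖g₁ z‖ * ‖z‖ ^ 2 * ‖z‖ ^ (2 * n)
        = ‖(P₁ j).eval z‖ * (‖z‖ ^ (2 * n + 2) * ‖S z‖) := by
      rw [hg₁def]; simp only [norm_mul]; ring
    have step : ‖g₁ z‖ * ‖z‖ ^ 2 * ‖z‖ ^ (2 * n) ≤ (M₁ * C) * ‖z‖ ^ (2 * n) := by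
      rw [e1]
      calc ‖(P₁ j).eval z‖ * (‖z‖ ^ (2 * n + 2) * ‖S z‖)
          ≤ (M₁ * ‖z‖ ^ (n + j)) * C :=
            mul_le_mul (hM₁ z hA1) hs' (by positivity) (by positivity)
        _ ≤ (M₁ * C) * ‖z‖ ^ (2 * n) := by
            rw [mul_comm (M₁ * ‖z‖ ^ (n + j)) C, ← mul_assoc, mul_comm C M₁, mul_assoc, mul_assoc]
            exact mul_le_mul_of_nonneg_left
              (mul_le_mul_of_nonneg_left (pow_le_pow_right₀ hA1 (show n + j ≤ 2 * n by omega)) hC0)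
              hM₁0
    exact le_of_mul_le_mul_right step (pow_pos hA0 (2 * n))
  -- integral of g₂ vanishes
  have h2 : (∮ ζ in C(0, r), g₂ ζ) = 0 := by
    refine circleIntegral_eq_zero_of_decay R g₂ hg₂d (M₂ * Cj) (max Rj 1) (by positivity)
      (fun z hz => ?_) r hr hr0
    have hA1 : (1 : ℝ) ≤ ‖z‖ := le_trans (le_max_right _ _) hz.le
    have hAR : Rj < ‖z‖ := lt_of_le_of_lt (le_max_left _ _) hz
    have hA0 : (0 : ℝ) < ‖z‖ := lt_of_lt_of_le one_pos hA1
    have hs' : ‖z‖ ^ (n + j + 1) * ‖T z‖ ≤ Cj := by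
      have := hT z hAR
      rwa [norm_mul, norm_pow] at this
    have epow : ‖z‖ ^ 2 * ‖z‖ ^ (n + j - 1) = ‖z‖ ^ (n + j + 1) := by
      rw [← pow_add]; congr 1; omega
    have e1 : ‖g₂ z‖ * ‖z‖ ^ 2 * ‖z‖ ^ (n + j - 1)
        = ‖Q₁.eval z‖ * (‖z‖ ^ (n + j + 1) * ‖T z‖) := by
      rw [hg₂def]; simp only [norm_mul]
      rw [mul_assoc (‖Q₁.eval z‖ * ‖T z‖), epow]; ring
    have step : ‖g₂ z‖ * ‖z‖ ^ 2 * ‖z‖ ^ (n + j - 1) ≤ (M₂ * Cj) * ‖z‖ ^ (n + j - 1) := by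
      rw [e1]
      calc ‖Q₁.eval z‖ * (‖z‖ ^ (n + j + 1) * ‖T z‖)
          ≤ (M₂ * ‖z‖ ^ n) * Cj :=
            mul_le_mul (hM₂ z hA1) hs' (by positivity) (by positivity)
        _ ≤ (M₂ * Cj) * ‖z‖ ^ (n + j - 1) := by
            rw [mul_comm (M₂ * ‖z‖ ^ n) Cj, ← mul_assoc, mul_comm Cj M₂, mul_assoc, mul_assoc]
            exact mul_le_mul_of_nonneg_left
              (mul_le_mul_of_nonneg_left (pow_le_pow_right₀ hA1 (show n ≤ n + j - 1 by omega)) hCj0)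
              hM₂0
    exact le_of_mul_le_mul_right step (pow_pos hA0 (n + j - 1))
  -- integral of g₃ vanishes (Cauchy-Goursat for the disk)
  have h3 : (∮ ζ in C(0, r), g₃ ζ) = 0 :=
    Complex.circleIntegral_eq_zero_of_differentiable_on_off_countable hr0.le
      Set.countable_empty (hg₃d.continuous.continuousOn)
      (fun z _ => hg₃d.differentiableAt)
  -- algebraic decomposition
  have hfun : (fun ζ : ℂ => Q₂.eval ζ * (f ζ) ^ 2 * (P₁ j).eval ζ)
      = fun ζ => g₁ ζ - (g₂ ζ - g₃ ζ) := by
    funext ζ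
    rw [hg₁def, hg₂def, hg₃def, hSdef, hTdef]
    ring
  calc (∮ ζ in C(0, r), Q₂.eval ζ * (f ζ) ^ 2 * (P₁ j).eval ζ)
      = ∮ ζ in C(0, r), (g₁ ζ - (g₂ ζ - g₃ ζ)) := by rw [hfun]
    _ = (∮ ζ in C(0, r), g₁ ζ) - ∮ ζ in C(0, r), (g₂ ζ - g₃ ζ) :=
        circleIntegral.integral_sub hi₁ hi₂₃
    _ = (∮ ζ in C(0, r), g₁ ζ) - ((∮ ζ in C(0, r), g₂ ζ) - ∮ ζ in C(0, r), g₃ ζ) := by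
        rw [circleIntegral.integral_sub hi₂ hi₃]
    _ = 0 := by rw [h1, h2, h3]; ring
end

section
/- Let f(z) = ∏_{j=1}^{3} (z − a_j)^{α_j} with distinct points a_1, a_2, a_3 ∈ ℂ, exponents α_j ∈ ℂ \ ℤ with α_1 + α_2 + α_3 = 0, where the branch holomorphic in a neighborhood of ∞ with f(∞) = 1 is taken. Let (P_{n,0}, P_{n,1}) be a Padé pair of order n for f (polynomials of degree at most n with T_n := P_{n,0} + P_{n,1} f = O(z^{-n-1}) as z → ∞), and suppose that P_{n,0} and P_{n,1} f are linearly independent over ℂ. Then there exist polynomials Π_1 of degree at most 1, Π_2 of degree at most 2, and Π_3 of degree at most 3, not all zero, such that each of the three functions w = P_{n,0}, w = P_{n,1} f, and w = T_n satisfies the second-order differential equation A_3(z) Π_1(z) w'' + Π_3(z) w' + Π_2(z) w = 0 on the complement of {a_1, a_2, a_3} (on each simply connected subdomain, for each branch), where A_3(z) = ∏_{j=1}^{3} (z − a_j). -/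
open Polynomial Filter Metric


lemma master {V : Set ℂ} (hV : IsOpen V) (Ap Bp : Polynomial ℂ)
    (hAV : ∀ z ∈ V, Ap.eval z ≠ 0) (g : ℂ → ℂ) (hg : DifferentiableOn ℂ g V)
    (hode : ∀ z ∈ V, Ap.eval z * deriv g z = Bp.eval z * g z) (P Q : Polynomial ℂ) :
    ∀ z ∈ V,
      Ap.eval z * deriv (fun y => P.eval y + Q.eval y * g y) z
          = (Ap * derivative P).eval z + (Ap * derivative Q + Bp * Q).eval z * g z
      ∧ (Ap.eval z)^2 * iteratedDeriv 2 (fun y => P.eval y + Q.eval y * g y) z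
          = (Ap^2 * derivative (derivative P)).eval z
            + (Ap^2 * derivative (derivative Q) + 2*Ap*Bp*derivative Q
               + (Ap*derivative Bp - derivative Ap * Bp + Bp^2)*Q).eval z * g z := by
  set φ : ℂ → ℂ := fun z => Bp.eval z / Ap.eval z with hφdef
  have hgd : ∀ z ∈ V, HasDerivAt g (φ z * g z) z := by
    intro z hz
    have h1 := (hg.differentiableAt (hV.mem_nhds hz)).hasDerivAt
    have h2 : deriv g z = φ z * g z := by
      have hA := hAV z hz
      rw [hφdef]
      rw [div_mul_eq_mul_div, eq_div_iff hA]
      linear_combination hode z hz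
    rwa [h2] at h1
  have hw' : ∀ z ∈ V, HasDerivAt (fun y => P.eval y + Q.eval y * g y)
      ((derivative P).eval z + ((derivative Q).eval z * g z + Q.eval z * (φ z * g z))) z := by
    intro z hz
    exact (P.hasDerivAt z).add ((Q.hasDerivAt z).mul (hgd z hz))
  have hφd : ∀ z ∈ V, HasDerivAt φ
      (((derivative Bp).eval z * Ap.eval z - Bp.eval z * (derivative Ap).eval z)
        / (Ap.eval z)^2) z := by
    intro z hz
    exact (Bp.hasDerivAt z).div (Ap.hasDerivAt z) (hAV z hz)
  intro z hz
  have hA := hAV z hz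
  constructor
  · rw [(hw' z hz).deriv]
    simp only [eval_add, eval_mul, hφdef]
    field_simp
  · -- second derivative
    have hd2 : iteratedDeriv 2 (fun y => P.eval y + Q.eval y * g y) z
        = deriv (deriv (fun y => P.eval y + Q.eval y * g y)) z := by
      rw [iteratedDeriv_succ, iteratedDeriv_one]
    rw [hd2]
    have hev : deriv (fun y => P.eval y + Q.eval y * g y)
        =ᶠ[nhds z] (fun y => (derivative P).eval y
          + ((derivative Q).eval y * g y + Q.eval y * (φ y * g y))) := by
      filter_upwards [hV.mem_nhds hz] with y hy
      exact (hw' y hy).deriv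
    rw [hev.deriv_eq]
    have hD : HasDerivAt (fun y => (derivative P).eval y
        + ((derivative Q).eval y * g y + Q.eval y * (φ y * g y)))
        ((derivative (derivative P)).eval z
          + (((derivative (derivative Q)).eval z * g z + (derivative Q).eval z * (φ z * g z))
            + ((derivative Q).eval z * (φ z * g z)
               + Q.eval z * ((((derivative Bp).eval z * Ap.eval z
                  - Bp.eval z * (derivative Ap).eval z) / (Ap.eval z)^2) * g z
                  + φ z * (φ z * g z))))) z := by
      exact ((derivative P).hasDerivAt z).add
        ((((derivative Q).hasDerivAt z).mul (hgd z hz)).add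
          ((Q.hasDerivAt z).mul ((hφd z hz).mul (hgd z hz))))
    rw [hD.deriv]
    rw [show ((derivative (derivative P)).eval z
          + (((derivative (derivative Q)).eval z * g z + (derivative Q).eval z * (φ z * g z))
            + ((derivative Q).eval z * (φ z * g z)
               + Q.eval z * ((((derivative Bp).eval z * Ap.eval z
                  - Bp.eval z * (derivative Ap).eval z) / (Ap.eval z)^2) * g z
                  + φ z * (φ z * g z)))))
        = ((Ap^2 * derivative (derivative P)).eval z
            + (Ap^2 * derivative (derivative Q) + 2*Ap*Bp*derivative Q
               + (Ap*derivative Bp - derivative Ap * Bp + Bp^2)*Q).eval z * g z) / (Ap.eval z)^2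
      from by
        simp only [eval_add, eval_mul, eval_sub, eval_pow, eval_ofNat, hφdef]
        have hinv : (Ap.eval z) ^ 6 * ((Ap.eval z)⁻¹)^6 = 1 := by
          rw [← mul_pow, mul_inv_cancel₀ hA, one_pow]
        field_simp
        ring]
    rw [mul_comm, div_mul_cancel₀ _ (pow_ne_zero 2 hA)]


lemma real_norm_cast (x : ℝ) (hx : 0 ≤ x) : ‖(x : ℂ)‖ = x := by
  rw [Complex.norm_real, Real.norm_eq_abs, abs_of_nonneg hx]

-- growth upper bound
lemma poly_upper (p : Polynomial ℂ) (m : ℕ) (hm : p.natDegree ≤ m) :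
    ∃ K : ℝ, 0 ≤ K ∧ ∀ z : ℂ, 1 ≤ ‖z‖ → ‖p.eval z‖ ≤ K * ‖z‖ ^ m := by
  refine ⟨∑ i ∈ Finset.range (m+1), ‖p.coeff i‖,
    Finset.sum_nonneg fun i _ => norm_nonneg _, fun z hz => ?_⟩
  rw [Polynomial.eval_eq_sum_range' (Nat.lt_succ_of_le hm)]
  calc ‖∑ i ∈ Finset.range (m+1), p.coeff i * z ^ i‖
      ≤ ∑ i ∈ Finset.range (m+1), ‖p.coeff i * z ^ i‖ := norm_sum_le _ _
    _ ≤ ∑ i ∈ Finset.range (m+1), ‖p.coeff i‖ * ‖z‖ ^ m := by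
        refine Finset.sum_le_sum fun i hi => ?_
        rw [norm_mul, norm_pow]
        exact mul_le_mul_of_nonneg_left
          (pow_le_pow_right₀ hz (Nat.lt_succ_iff.mp (Finset.mem_range.mp hi))) (norm_nonneg _)
    _ = _ := by rw [Finset.sum_mul]

lemma poly_deg_of_growth : ∀ (m : ℕ) (p : Polynomial ℂ) (K r : ℝ), 0 ≤ r →
    (∀ z : ℂ, r ≤ ‖z‖ → ‖p.eval z‖ ≤ K * ‖z‖ ^ m) → p.natDegree ≤ m := by
  intro m
  induction m with
  | zero =>
    intro p K r hr hb
    by_contra hdeg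
    have hd : 0 < p.degree := natDegree_pos_iff_degree_pos.mp (Nat.pos_of_ne_zero (by omega))
    have hz : Tendsto (fun k : ℕ => ‖((r + 1 + k : ℝ) : ℂ)‖) atTop atTop := by
      have h0 : Tendsto (fun k : ℕ => r + 1 + (k : ℝ)) atTop atTop :=
        tendsto_atTop_add_const_left _ _ tendsto_natCast_atTop_atTop
      refine h0.congr fun k => ?_
      rw [real_norm_cast _ (by positivity)]
    have htend := p.tendsto_norm_atTop hd hz
    obtain ⟨k, hk1, hk2⟩ := ((htend.eventually_gt_atTop K).and
      (Filter.Eventually.of_forall (fun k : ℕ => hb ((r + 1 + k : ℝ) : ℂ)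
        (by rw [real_norm_cast _ (by positivity)]
            nlinarith [Nat.cast_nonneg (α := ℝ) k])))).exists
    simp only [pow_zero, mul_one] at hk2
    exact absurd hk2 (not_le.mpr hk1)
  | succ m ih =>
    intro p K r hr hb
    set q := p.divX with hq
    have hbq : ∀ z : ℂ, max r 1 ≤ ‖z‖ → ‖q.eval z‖ ≤ (K + ‖p.coeff 0‖) * ‖z‖ ^ m := by
      intro z hz
      have hz1 : (1:ℝ) ≤ ‖z‖ := le_trans (le_max_right _ _) hz
      have hzr : r ≤ ‖z‖ := le_trans (le_max_left _ _) hz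
      have hzpos : (0:ℝ) < ‖z‖ := lt_of_lt_of_le one_pos hz1
      have hpm : (1:ℝ) ≤ ‖z‖ ^ (m+1) := one_le_pow₀ hz1
      have key : ‖q.eval z‖ * ‖z‖ ≤ ((K + ‖p.coeff 0‖) * ‖z‖ ^ m) * ‖z‖ := by
        have hev : z * q.eval z + p.coeff 0 = p.eval z := by
          have h := congrArg (Polynomial.eval z) (Polynomial.X_mul_divX_add p)
          simp only [eval_add, eval_mul, eval_X, eval_C] at h
          exact h
        have h1 : ‖q.eval z‖ * ‖z‖ = ‖z * q.eval z‖ := by rw [norm_mul]; ring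
        have h2 : ‖z * q.eval z‖ ≤ ‖p.eval z‖ + ‖p.coeff 0‖ := by
          have h5 : z * q.eval z = p.eval z - p.coeff 0 := by rw [← hev]; ring
          rw [h5]; exact norm_sub_le _ _
        have h3 : ‖p.eval z‖ ≤ K * ‖z‖ ^ (m+1) := hb z hzr
        have h4 : ‖p.coeff 0‖ ≤ ‖p.coeff 0‖ * ‖z‖ ^ (m+1) :=
          le_mul_of_one_le_right (norm_nonneg _) hpm
        have h6 : ((K + ‖p.coeff 0‖) * ‖z‖ ^ m) * ‖z‖ = (K + ‖p.coeff 0‖) * ‖z‖ ^ (m+1) := by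
          rw [pow_succ]; ring
        rw [h1, h6]
        nlinarith
      exact le_of_mul_le_mul_right key hzpos
    have hdq : q.natDegree ≤ m := ih q (K + ‖p.coeff 0‖) (max r 1) (by positivity) hbq
    have : p.natDegree = (X * q + C (p.coeff 0)).natDegree := by rw [Polynomial.X_mul_divX_add]
    rw [this]
    refine le_trans (natDegree_add_le _ _) (max_le (le_trans (natDegree_mul_le) ?_) (by simp))
    have := Polynomial.natDegree_X_le (R := ℂ)
    omega

lemma decay_step {F : ℂ → ℂ} {r₀ C : ℝ} (hr₀ : 0 < r₀)
    (hF : DifferentiableOn ℂ F {z : ℂ | r₀ < ‖z‖}) (k : ℕ)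
    (hC : ∀ z : ℂ, r₀ < ‖z‖ → ‖F z‖ * ‖z‖ ^ k ≤ C) :
    ∀ z : ℂ, 3 * r₀ < ‖z‖ → ‖deriv F z‖ * ‖z‖ ^ (k+1) ≤ 3 ^ (k+1) * C := by
  intro z hz
  set ρ := ‖z‖ with hρdef
  have hρ : 0 < ρ := lt_trans (by positivity) hz
  have hrr : 0 < ρ / 3 := by positivity
  have hC0 : 0 ≤ C := le_trans (by positivity) (hC z (by nlinarith))
  have hsub : closedBall z (ρ/3) ⊆ {w : ℂ | r₀ < ‖w‖} := by
    intro w hw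
    simp only [mem_closedBall, dist_eq_norm] at hw
    have : ρ - ρ/3 ≤ ‖w‖ := by
      have h1 : ρ ≤ ‖w‖ + ‖z - w‖ := by
        calc ρ = ‖w + (z - w)‖ := by ring_nf; exact hρdef
          _ ≤ ‖w‖ + ‖z - w‖ := norm_add_le _ _
      have h2 : ‖z - w‖ = ‖w - z‖ := norm_sub_rev _ _
      linarith [hw, h2 ▸ h1]
    have : 2 * ρ / 3 ≤ ‖w‖ := by linarith
    simp only [Set.mem_setOf_eq]; nlinarith
  have hdc : DiffContOnCl ℂ F (ball z (ρ/3)) := by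
    refine DifferentiableOn.diffContOnCl ?_
    rw [closure_ball z (ne_of_gt hrr)]
    exact hF.mono hsub
  have hsb : ∀ w ∈ sphere z (ρ/3), ‖F w‖ ≤ C / (ρ/3) ^ k := by
    intro w hw
    have hwmem : w ∈ {w : ℂ | r₀ < ‖w‖} := hsub (sphere_subset_closedBall hw)
    have hwlb : ρ / 3 ≤ ‖w‖ := by
      simp only [mem_sphere, dist_eq_norm] at hw
      have h1 : ρ ≤ ‖w‖ + ‖z - w‖ := by
        calc ρ = ‖w + (z - w)‖ := by ring_nf; exact hρdef
          _ ≤ ‖w‖ + ‖z - w‖ := norm_add_le _ _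
      have h2 : ‖z - w‖ = ‖w - z‖ := norm_sub_rev _ _
      rw [h2, hw] at h1
      linarith
    have hb := hC w hwmem
    rw [le_div_iff₀ (pow_pos hrr k)]
    calc ‖F w‖ * (ρ/3)^k ≤ ‖F w‖ * ‖w‖^k := by
          exact mul_le_mul_of_nonneg_left (pow_le_pow_left₀ (le_of_lt hrr) hwlb k) (norm_nonneg _)
      _ ≤ C := hb
  have hder := Complex.norm_deriv_le_of_forall_mem_sphere_norm_le hrr hdc hsb
  have heq : C / (ρ/3)^k / (ρ/3) * ρ^(k+1) = 3^(k+1) * C := by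
    rw [div_pow]
    field_simp
    ring
  calc ‖deriv F z‖ * ρ^(k+1) ≤ (C / (ρ/3)^k / (ρ/3)) * ρ^(k+1) := by
        exact mul_le_mul_of_nonneg_right hder (by positivity)
    _ = 3^(k+1) * C := heq

lemma natDegree_X_mul_deriv (p : Polynomial ℂ) : (X * derivative p).natDegree ≤ p.natDegree := by
  by_cases h : derivative p = 0
  · simp [h]
  · have h1 : 1 ≤ p.natDegree := by
      by_contra h2
      have : p.natDegree = 0 := by omega
      rw [Polynomial.eq_C_of_natDegree_eq_zero this] at h
      simp at h
    have h2 := Polynomial.natDegree_derivative_le p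
    refine le_trans (natDegree_mul_le) ?_
    have := Polynomial.natDegree_X_le (R := ℂ)
    omega
lemma natDegree_X2_mul_deriv2 (p : Polynomial ℂ) :
    (X^2 * derivative (derivative p)).natDegree ≤ p.natDegree := by
  by_cases h : derivative (derivative p) = 0
  · simp [h]
  · have hd1 : derivative p ≠ 0 := fun h0 => h (by rw [h0]; simp)
    have h1 : 1 ≤ (derivative p).natDegree := by
      by_contra h2
      have : (derivative p).natDegree = 0 := by omega
      rw [Polynomial.eq_C_of_natDegree_eq_zero this] at h
      simp at h
    have h2 := Polynomial.natDegree_derivative_le p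
    have h3 := Polynomial.natDegree_derivative_le (derivative p)
    refine le_trans (natDegree_mul_le) ?_
    have h4 : (X^2 : Polynomial ℂ).natDegree ≤ 2 := by
      refine le_trans (Polynomial.natDegree_pow_le ..) ?_
      have := Polynomial.natDegree_X_le (R := ℂ); omega
    omega
lemma hAdeg_test (a : Fin 3 → ℂ) : (∏ j, (X - C (a j)) : Polynomial ℂ).natDegree ≤ 3 := by
  refine le_trans (Polynomial.natDegree_prod_le _ _) ?_
  simp [Polynomial.natDegree_X_sub_C]

lemma preconn_ext {R : ℝ} (hR : 0 < R) : IsPreconnected {z : ℂ | R < ‖z‖} := by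
  have hsph : IsConnected (Metric.sphere (0:ℂ) 1) :=
    isConnected_sphere (by rw [Complex.rank_real_complex]; exact Cardinal.one_lt_two) 0 zero_le_one
  have hprod : IsConnected ((Set.Ioi R) ×ˢ (Metric.sphere (0:ℂ) 1)) :=
    (isConnected_Ioi).prod hsph
  have hcont : Continuous (fun p : ℝ × ℂ => (p.1 : ℂ) * p.2) :=
    (Complex.continuous_ofReal.comp continuous_fst).mul continuous_snd
  have himg := hprod.image _ hcont.continuousOn
  have heq : (fun p : ℝ × ℂ => (p.1 : ℂ) * p.2) '' ((Set.Ioi R) ×ˢ (Metric.sphere (0:ℂ) 1))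
      = {z : ℂ | R < ‖z‖} := by
    ext z
    constructor
    · rintro ⟨⟨r, u⟩, ⟨hr, hu⟩, rfl⟩
      simp only [Set.mem_Ioi] at hr
      simp only [mem_sphere_iff_norm, sub_zero] at hu
      simp only [Set.mem_setOf_eq, norm_mul, hu, mul_one, Complex.norm_real]
      rw [Real.norm_eq_abs, abs_of_pos (lt_trans hR hr)]
      exact hr
    · intro hz
      simp only [Set.mem_setOf_eq] at hz
      have hz0 : z ≠ 0 := by
        intro h; rw [h, norm_zero] at hz; linarith
      have hnz : (‖z‖ : ℂ) ≠ 0 := by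
        simp only [ne_eq, Complex.ofReal_eq_zero, norm_eq_zero]; exact hz0
      refine ⟨⟨‖z‖, (‖z‖ : ℂ)⁻¹ * z⟩, ⟨Set.mem_Ioi.mpr hz, ?_⟩, ?_⟩
      · simp only [mem_sphere_iff_norm, sub_zero, norm_mul, norm_inv, Complex.norm_real,
          Real.norm_eq_abs, abs_of_pos (lt_trans hR hz)]
        rw [inv_mul_cancel₀ (by simpa [norm_eq_zero] using hz0 : ‖z‖ ≠ 0)]
      · show (‖z‖ : ℂ) * ((‖z‖ : ℂ)⁻¹ * z) = z
        rw [← mul_assoc, mul_inv_cancel₀ hnz, one_mul]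
  rw [heq] at himg
  exact himg.isPreconnected


set_option maxHeartbeats 2000000 in
/-- Laguerre's differential equation. For `f(z) = ∏_{j=1}^3 (z−a_j)^{α_j}`
(the branch holomorphic near `∞` with `f(∞) = 1`, characterized here by the first-order
equation `A₃ f' = B f` with `B(z) = ∑_j α_j ∏_{k≠j}(z − a_k)` together with
`f(z) → 1` as `z → ∞`), a Padé pair `(P₀, P₁)` of order `n` with `P₀` and `P₁ f` linearly
independent gives rise to polynomials `Pi1, Pi2, Pi3` of degrees `≤ 1, 2, 3`, not all zero,
such that each of `w = P₀`, `w = P₁ g`, `w = P₀ + P₁ g` satisfies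
`A₃ Pi1 w'' + Pi3 w' + Pi2 w = 0` on every open subset of `ℂ \ {a₁,a₂,a₃}`, for every branch
`g` of `f` there (branches being the solutions of `A₃ g' = B g`). -/
theorem stmt_9
    (a : Fin 3 → ℂ) (ha : Function.Injective a)
    (α : Fin 3 → ℂ) (hα : ∀ j, ∀ m : ℤ, α j ≠ (m : ℂ)) (hsum : ∑ j, α j = 0)
    (R : ℝ) (hR : ∀ j, ‖a j‖ < R)
    (f : ℂ → ℂ)
    (hf : DifferentiableOn ℂ f {z : ℂ | R < ‖z‖})
    (hf1 : Filter.Tendsto f (Bornology.cobounded ℂ) (nhds 1))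
    (hbranch : ∀ z : ℂ, R < ‖z‖ →
      (∏ j, (z - a j)) * deriv f z
        = (∑ j, α j * ∏ k ∈ Finset.univ.erase j, (z - a k)) * f z)
    (n : ℕ) (P₀ P₁ : Polynomial ℂ)
    (hne : ¬(P₀ = 0 ∧ P₁ = 0))
    (hdeg₀ : P₀.natDegree ≤ n) (hdeg₁ : P₁.natDegree ≤ n)
    (hrem : ∃ C R' : ℝ, ∀ z : ℂ, R' < ‖z‖ →
      ‖z ^ (n + 1) * (P₀.eval z + P₁.eval z * f z)‖ ≤ C)
    (hind : ∀ c₀ c₁ : ℂ,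
      (∀ z : ℂ, R < ‖z‖ → c₀ * P₀.eval z + c₁ * (P₁.eval z * f z) = 0) →
      c₀ = 0 ∧ c₁ = 0) :
    ∃ Pi1 Pi2 Pi3 : Polynomial ℂ,
      Pi1.natDegree ≤ 1 ∧ Pi2.natDegree ≤ 2 ∧ Pi3.natDegree ≤ 3 ∧
      ¬(Pi1 = 0 ∧ Pi2 = 0 ∧ Pi3 = 0) ∧
      ∀ U : Set ℂ, IsOpen U → U ⊆ {z : ℂ | ∀ j, z ≠ a j} →
        ∀ g : ℂ → ℂ, DifferentiableOn ℂ g U →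
          (∀ z ∈ U, (∏ j, (z - a j)) * deriv g z
              = (∑ j, α j * ∏ k ∈ Finset.univ.erase j, (z - a k)) * g z) →
          ∀ w : ℂ → ℂ,
            (w = fun z => P₀.eval z) ∨ (w = fun z => P₁.eval z * g z) ∨
              (w = fun z => P₀.eval z + P₁.eval z * g z) →
            ∀ z ∈ U,
              (∏ j, (z - a j)) * Pi1.eval z * iteratedDeriv 2 w z
                + Pi3.eval z * deriv w z + Pi2.eval z * w z = 0 := by
  classical
  have hR0 : 0 < R := lt_of_le_of_lt (norm_nonneg (a 0)) (hR 0)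
  set Ap : Polynomial ℂ := ∏ j, (X - C (a j)) with hApdef
  set Bp : Polynomial ℂ := ∑ j, C (α j) * ∏ k ∈ Finset.univ.erase j, (X - C (a k)) with hBpdef
  have hApev : ∀ z : ℂ, Ap.eval z = ∏ j, (z - a j) := by
    intro z; simp [hApdef, Polynomial.eval_prod]
  have hBpev : ∀ z : ℂ, Bp.eval z = ∑ j, α j * ∏ k ∈ Finset.univ.erase j, (z - a k) := by
    intro z; simp [hBpdef, Polynomial.eval_finset_sum, Polynomial.eval_prod]
  set Cp : Polynomial ℂ := Ap * derivative Bp - derivative Ap * Bp + Bp ^ 2 with hCpdef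
  set S1 : Polynomial ℂ :=
    Ap * (P₀ * derivative P₁ - derivative P₀ * P₁) + Bp * P₀ * P₁ with hS1def
  set S3 : Polynomial ℂ :=
    -(Ap^2 * (P₀ * derivative (derivative P₁) - derivative (derivative P₀) * P₁)
      + 2 * Ap * Bp * P₀ * derivative P₁ + Cp * P₀ * P₁) with hS3def
  set S2 : Polynomial ℂ :=
    Ap^2 * (derivative P₀ * derivative (derivative P₁)
        - derivative (derivative P₀) * derivative P₁)
      + 2 * Ap * Bp * derivative P₀ * derivative P₁ + Cp * derivative P₀ * P₁
      - Ap * Bp * derivative (derivative P₀) * P₁ with hS2def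
  have hJ : S1 * (Ap^2 * derivative (derivative P₀)) + S3 * (Ap * derivative P₀)
      + S2 * (Ap * P₀) = 0 := by
    rw [hS1def, hS2def, hS3def, hCpdef]; ring
  have hK : S1 * (Ap^2 * derivative (derivative P₁) + 2*Ap*Bp*derivative P₁ + Cp * P₁)
      + S3 * (Ap * derivative P₁ + Bp * P₁) + S2 * (Ap * P₁) = 0 := by
    rw [hS1def, hS2def, hS3def, hCpdef]; ring
  -- the region near infinity
  set Ω : Set ℂ := {z : ℂ | R < ‖z‖} with hΩdef
  have hΩopen : IsOpen Ω := isOpen_lt continuous_const continuous_norm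
  have hAΩ : ∀ z ∈ Ω, Ap.eval z ≠ 0 := by
    intro z hz
    rw [hApev]
    refine Finset.prod_ne_zero_iff.mpr fun j _ => sub_ne_zero.mpr fun hzz => ?_
    rw [hzz] at hz
    exact absurd (hR j) (not_lt.mpr (le_of_lt hz))
  have hodef : ∀ z ∈ Ω, Ap.eval z * deriv f z = Bp.eval z * f z := by
    intro z hz; rw [hApev, hBpev]; exact hbranch z hz
  have hmf := master hΩopen Ap Bp hAΩ f hf hodef P₀ P₁
  set T : ℂ → ℂ := fun y => P₀.eval y + P₁.eval y * f y with hTdef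

  have hTdiff : DifferentiableOn ℂ T Ω :=
    (P₀.differentiable.differentiableOn).add ((P₁.differentiable.differentiableOn).mul hf)
  have hiter2 : iteratedDeriv 2 T = deriv (deriv T) := by
    rw [iteratedDeriv_succ, iteratedDeriv_one]
  have hCz : ∀ z : ℂ, Cp.eval z = Ap.eval z * (derivative Bp).eval z
      - (derivative Ap).eval z * Bp.eval z + (Bp.eval z)^2 := by
    intro z; rw [hCpdef]; simp [eval_add, eval_mul, eval_sub, eval_pow]
  have hE1 : ∀ z ∈ Ω, S1.eval z * f z
      = Ap.eval z * (P₀.eval z * deriv T z - (derivative P₀).eval z * T z) := by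
    intro z hz
    obtain ⟨e1, e2⟩ := hmf z hz
    have hTz : T z = P₀.eval z + P₁.eval z * f z := rfl
    rw [hTz, hS1def]
    simp only [eval_add, eval_mul, eval_sub, eval_pow, eval_neg, eval_ofNat] at e1 ⊢
    linear_combination (-(P₀.eval z)) * e1
  have hE3 : ∀ z ∈ Ω, S3.eval z * f z
      = -((Ap.eval z)^2 * (P₀.eval z * deriv (deriv T) z
          - (derivative (derivative P₀)).eval z * T z)) := by
    intro z hz
    obtain ⟨e1, e2⟩ := hmf z hz
    rw [hiter2] at e2
    have hTz : T z = P₀.eval z + P₁.eval z * f z := rfl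
    rw [hTz, hS3def]
    simp only [eval_add, eval_mul, eval_sub, eval_pow, eval_neg, eval_ofNat, hCz] at e2 ⊢
    linear_combination (P₀.eval z) * e2
  have hE2 : ∀ z ∈ Ω, S2.eval z * f z
      = (Ap.eval z)^2 * ((derivative P₀).eval z * deriv (deriv T) z
          - (derivative (derivative P₀)).eval z * deriv T z) := by
    intro z hz
    obtain ⟨e1, e2⟩ := hmf z hz
    rw [hiter2] at e2
    rw [hS2def]
    simp only [eval_add, eval_mul, eval_sub, eval_pow, eval_neg, eval_ofNat, hCz] at e1 e2 ⊢
    linear_combination (-((derivative P₀).eval z)) * e2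
      + (Ap.eval z * (derivative (derivative P₀)).eval z) * e1
  -- decay of T and its derivatives
  obtain ⟨C0, R', hrem'⟩ := hrem
  set R1 : ℝ := max R R' with hR1def
  have hR1pos : 0 < R1 := lt_of_lt_of_le hR0 (le_max_left _ _)
  have hRR1 : R ≤ R1 := le_max_left _ _
  have hsub1 : {z : ℂ | R1 < ‖z‖} ⊆ Ω := by
    intro z hz
    have hz' : R1 < ‖z‖ := hz
    show R < ‖z‖
    linarith
  have hTdec : ∀ z : ℂ, R1 < ‖z‖ → ‖T z‖ * ‖z‖^(n+1) ≤ C0 := by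
    intro z hz
    have h := hrem' z (lt_of_le_of_lt (le_max_right _ _) hz)
    rw [norm_mul, norm_pow] at h
    calc ‖T z‖ * ‖z‖^(n+1) = ‖z‖^(n+1) * ‖P₀.eval z + P₁.eval z * f z‖ := by
          rw [mul_comm]
      _ ≤ C0 := h
  have hC00 : 0 ≤ C0 := by
    have hnorm : ‖((R1+1:ℝ):ℂ)‖ = R1+1 := real_norm_cast _ (by linarith)
    have h := hTdec (((R1 + 1 : ℝ) : ℂ)) (by rw [hnorm]; linarith)
    exact le_trans (by positivity) h
  have hT'dec := decay_step hR1pos (hTdiff.mono hsub1) (n+1) hTdec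
  have hT'diff : DifferentiableOn ℂ (deriv T) {z : ℂ | 3*R1 < ‖z‖} := by
    refine DifferentiableOn.mono
      (((hTdiff.analyticOnNhd hΩopen).deriv).differentiableOn) (fun z hz => ?_)
    have hz' : 3*R1 < ‖z‖ := hz
    show R < ‖z‖
    nlinarith
  have hT''dec := decay_step (by positivity : (0:ℝ) < 3*R1) hT'diff (n+2) hT'dec
  -- polynomial upper bounds
  have hAdeg : Ap.natDegree ≤ 3 := by
    rw [hApdef]
    refine le_trans (Polynomial.natDegree_prod_le _ _) ?_
    simp [Polynomial.natDegree_X_sub_C]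
  obtain ⟨KA, hKA0, hKA⟩ := poly_upper Ap 3 hAdeg
  obtain ⟨K0, hK00, hK0⟩ := poly_upper P₀ n hdeg₀
  obtain ⟨K1, hK10, hK1⟩ := poly_upper (X * derivative P₀) n
    (le_trans (natDegree_X_mul_deriv P₀) hdeg₀)
  obtain ⟨K2, hK20, hK2⟩ := poly_upper (X^2 * derivative (derivative P₀)) n
    (le_trans (natDegree_X2_mul_deriv2 P₀) hdeg₀)
  -- lower bound for f near infinity
  obtain ⟨Rf, hflow⟩ : ∃ Rf : ℝ, ∀ z : ℂ, Rf < ‖z‖ → 1/2 ≤ ‖f z‖ := by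
    have hev : ∀ᶠ z in Bornology.cobounded ℂ, dist (f z) 1 < 1/2 :=
      Metric.tendsto_nhds.mp hf1 (1/2) (by norm_num)
    rw [(Metric.hasBasis_cobounded_compl_closedBall (0:ℂ)).eventually_iff] at hev
    obtain ⟨r, -, hr⟩ := hev
    refine ⟨r, fun z hz => ?_⟩
    have hmem : z ∈ (Metric.closedBall (0:ℂ) r)ᶜ := by
      simp only [Set.mem_compl_iff, Metric.mem_closedBall, dist_zero_right, not_le]
      exact hz
    have hd := hr hmem
    rw [dist_eq_norm] at hd
    have h1 : (1:ℝ) = ‖(1:ℂ)‖ := by simp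
    have h2 : ‖(1:ℂ)‖ ≤ ‖f z‖ + ‖f z - 1‖ := by
      calc ‖(1:ℂ)‖ = ‖f z - (f z - 1)‖ := by ring_nf
        _ ≤ ‖f z‖ + ‖f z - 1‖ := norm_sub_le _ _
    rw [← h1] at h2
    linarith
  -- the common large radius
  set Rbig : ℝ := max (3*(3*R1)) (max Rf 1) with hRbigdef
  have hRbig1 : 1 ≤ Rbig := le_trans (le_max_right _ _) (le_max_right _ _)
  have hfacts : ∀ z : ℂ, Rbig < ‖z‖ →
      (1 ≤ ‖z‖ ∧ z ∈ Ω ∧ R1 < ‖z‖ ∧ 3*R1 < ‖z‖ ∧ 3*(3*R1) < ‖z‖ ∧ 1/2 ≤ ‖f z‖) := by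
    intro z hz
    have h99 : 3*(3*R1) ≤ Rbig := le_max_left _ _
    have hRf : Rf ≤ Rbig := le_trans (le_max_left _ _) (le_max_right _ _)
    refine ⟨le_trans hRbig1 (le_of_lt hz), ?_, by nlinarith, by nlinarith, by nlinarith,
      hflow z (lt_of_le_of_lt hRf hz)⟩
    show R < ‖z‖
    have : R ≤ R1 := le_max_left _ _
    nlinarith
  have hd1 : S1.natDegree ≤ 1 := by
    refine poly_deg_of_growth 1 S1 (2*(KA*(K0*(3^(n+2)*C0) + K1*C0))) (Rbig+1)
      (by linarith) (fun z hz => ?_)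
    have hzb : Rbig < ‖z‖ := lt_of_lt_of_le (lt_add_one Rbig) hz
    obtain ⟨hx1, hzΩ, hz1, hz3, hz9, hfhalf⟩ := hfacts z hzb
    have hx0 : (0:ℝ) < ‖z‖ := lt_of_lt_of_le one_pos hx1
    have bA := hKA z hx1
    have b0 := hK0 z hx1
    have b1 := hK1 z hx1
    rw [eval_mul, eval_X, norm_mul] at b1
    have bT := hTdec z hz1
    have bT' := hT'dec z hz3
    have hE := hE1 z hzΩ
    have key : ‖S1.eval z‖ * ‖z‖^(n+2)
        ≤ ((2*(KA*(K0*(3^(n+2)*C0) + K1*C0))) * ‖z‖^1) * ‖z‖^(n+2) := by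
      have hp : (0:ℝ) ≤ ‖z‖^(n+2) := by positivity
      have step1 : ‖S1.eval z‖ * ‖z‖^(n+2) ≤ 2*‖S1.eval z * f z‖ * ‖z‖^(n+2) := by
        rw [norm_mul]
        have h2f : ‖S1.eval z‖ ≤ 2*(‖S1.eval z‖*‖f z‖) := by
          linarith [mul_le_mul_of_nonneg_left hfhalf (norm_nonneg (S1.eval z))]
        exact mul_le_mul_of_nonneg_right h2f hp
      refine le_trans step1 ?_
      rw [hE]
      have step3 : ‖Ap.eval z * (P₀.eval z * deriv T z - (derivative P₀).eval z * T z)‖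
          ≤ ‖Ap.eval z‖ * (‖P₀.eval z‖ * ‖deriv T z‖ + ‖(derivative P₀).eval z‖ * ‖T z‖) := by
        rw [norm_mul]
        refine mul_le_mul_of_nonneg_left ?_ (norm_nonneg _)
        refine le_trans (norm_sub_le _ _) ?_
        simp only [norm_mul]
        exact le_rfl
      calc 2*‖Ap.eval z * (P₀.eval z * deriv T z - (derivative P₀).eval z * T z)‖ * ‖z‖^(n+2)
          ≤ 2*(‖Ap.eval z‖ * (‖P₀.eval z‖ * ‖deriv T z‖
              + ‖(derivative P₀).eval z‖ * ‖T z‖)) * ‖z‖^(n+2) := by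
            linarith [mul_le_mul_of_nonneg_right step3 hp]
        _ = 2*‖Ap.eval z‖ * (‖P₀.eval z‖ * (‖deriv T z‖ * ‖z‖^(n+2))
              + (‖z‖ * ‖(derivative P₀).eval z‖) * (‖T z‖ * ‖z‖^(n+1))) := by ring
        _ ≤ 2*(KA*‖z‖^3) * ((K0*‖z‖^n) * (3^(n+2)*C0)
              + (K1*‖z‖^n) * C0) := by
            gcongr
        _ = ((2*(KA*(K0*(3^(n+2)*C0) + K1*C0))) * ‖z‖^1) * ‖z‖^(n+2) := by ring
    exact le_of_mul_le_mul_right key (by positivity)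

  have hd2 : S2.natDegree ≤ 2 := by
    refine poly_deg_of_growth 2 S2
      (2*(KA^2*(K1*(3^(n+3)*(3^(n+2)*C0)) + K2*(3^(n+2)*C0)))) (Rbig+1)
      (by linarith) (fun z hz => ?_)
    have hzb : Rbig < ‖z‖ := lt_of_lt_of_le (lt_add_one Rbig) hz
    obtain ⟨hx1, hzΩ, hz1, hz3, hz9, hfhalf⟩ := hfacts z hzb
    have hx0 : (0:ℝ) < ‖z‖ := lt_of_lt_of_le one_pos hx1
    have bA := hKA z hx1
    have b1 := hK1 z hx1
    rw [eval_mul, eval_X, norm_mul] at b1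
    have b2 := hK2 z hx1
    rw [eval_mul, eval_pow, eval_X, norm_mul, norm_pow] at b2
    have bT' := hT'dec z hz3
    have bT'' := hT''dec z hz9
    have hE := hE2 z hzΩ
    have key : ‖S2.eval z‖ * ‖z‖^(n+4)
        ≤ ((2*(KA^2*(K1*(3^(n+3)*(3^(n+2)*C0)) + K2*(3^(n+2)*C0)))) * ‖z‖^2) * ‖z‖^(n+4) := by
      have hp : (0:ℝ) ≤ ‖z‖^(n+4) := by positivity
      have step1 : ‖S2.eval z‖ * ‖z‖^(n+4) ≤ 2*‖S2.eval z * f z‖ * ‖z‖^(n+4) := by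
        rw [norm_mul]
        have h2f : ‖S2.eval z‖ ≤ 2*(‖S2.eval z‖*‖f z‖) := by
          linarith [mul_le_mul_of_nonneg_left hfhalf (norm_nonneg (S2.eval z))]
        exact mul_le_mul_of_nonneg_right h2f hp
      refine le_trans step1 ?_
      rw [hE]
      have step3 : ‖(Ap.eval z)^2 * ((derivative P₀).eval z * deriv (deriv T) z
            - (derivative (derivative P₀)).eval z * deriv T z)‖
          ≤ ‖Ap.eval z‖^2 * (‖(derivative P₀).eval z‖ * ‖deriv (deriv T) z‖
              + ‖(derivative (derivative P₀)).eval z‖ * ‖deriv T z‖) := by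
        rw [norm_mul, norm_pow]
        refine mul_le_mul_of_nonneg_left ?_ (by positivity)
        refine le_trans (norm_sub_le _ _) ?_
        simp only [norm_mul]
        exact le_rfl
      calc 2*‖(Ap.eval z)^2 * ((derivative P₀).eval z * deriv (deriv T) z
            - (derivative (derivative P₀)).eval z * deriv T z)‖ * ‖z‖^(n+4)
          ≤ 2*(‖Ap.eval z‖^2 * (‖(derivative P₀).eval z‖ * ‖deriv (deriv T) z‖
              + ‖(derivative (derivative P₀)).eval z‖ * ‖deriv T z‖)) * ‖z‖^(n+4) := by
            linarith [mul_le_mul_of_nonneg_right step3 hp]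
        _ = 2*‖Ap.eval z‖^2 * ((‖z‖ * ‖(derivative P₀).eval z‖) * (‖deriv (deriv T) z‖ * ‖z‖^(n+3))
              + (‖z‖^2 * ‖(derivative (derivative P₀)).eval z‖) * (‖deriv T z‖ * ‖z‖^(n+2))) := by
            ring
        _ ≤ 2*(KA*‖z‖^3)^2 * ((K1*‖z‖^n) * (3^(n+3)*(3^(n+2)*C0))
              + (K2*‖z‖^n) * (3^(n+2)*C0)) := by
            gcongr
        _ = ((2*(KA^2*(K1*(3^(n+3)*(3^(n+2)*C0)) + K2*(3^(n+2)*C0)))) * ‖z‖^2) * ‖z‖^(n+4) := by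
            ring
    exact le_of_mul_le_mul_right key (by positivity)
  have hd3 : S3.natDegree ≤ 3 := by
    refine poly_deg_of_growth 3 S3
      (2*(KA^2*(K0*(3^(n+3)*(3^(n+2)*C0)) + K2*C0))) (Rbig+1)
      (by linarith) (fun z hz => ?_)
    have hzb : Rbig < ‖z‖ := lt_of_lt_of_le (lt_add_one Rbig) hz
    obtain ⟨hx1, hzΩ, hz1, hz3, hz9, hfhalf⟩ := hfacts z hzb
    have hx0 : (0:ℝ) < ‖z‖ := lt_of_lt_of_le one_pos hx1
    have bA := hKA z hx1
    have b0 := hK0 z hx1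
    have b2 := hK2 z hx1
    rw [eval_mul, eval_pow, eval_X, norm_mul, norm_pow] at b2
    have bT := hTdec z hz1
    have bT'' := hT''dec z hz9
    have hE := hE3 z hzΩ
    have key : ‖S3.eval z‖ * ‖z‖^(n+3)
        ≤ ((2*(KA^2*(K0*(3^(n+3)*(3^(n+2)*C0)) + K2*C0))) * ‖z‖^3) * ‖z‖^(n+3) := by
      have hp : (0:ℝ) ≤ ‖z‖^(n+3) := by positivity
      have step1 : ‖S3.eval z‖ * ‖z‖^(n+3) ≤ 2*‖S3.eval z * f z‖ * ‖z‖^(n+3) := by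
        rw [norm_mul]
        have h2f : ‖S3.eval z‖ ≤ 2*(‖S3.eval z‖*‖f z‖) := by
          linarith [mul_le_mul_of_nonneg_left hfhalf (norm_nonneg (S3.eval z))]
        exact mul_le_mul_of_nonneg_right h2f hp
      refine le_trans step1 ?_
      rw [hE, norm_neg]
      have step3 : ‖(Ap.eval z)^2 * (P₀.eval z * deriv (deriv T) z
            - (derivative (derivative P₀)).eval z * T z)‖
          ≤ ‖Ap.eval z‖^2 * (‖P₀.eval z‖ * ‖deriv (deriv T) z‖
              + ‖(derivative (derivative P₀)).eval z‖ * ‖T z‖) := by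
        rw [norm_mul, norm_pow]
        refine mul_le_mul_of_nonneg_left ?_ (by positivity)
        refine le_trans (norm_sub_le _ _) ?_
        simp only [norm_mul]
        exact le_rfl
      calc 2*‖(Ap.eval z)^2 * (P₀.eval z * deriv (deriv T) z
            - (derivative (derivative P₀)).eval z * T z)‖ * ‖z‖^(n+3)
          ≤ 2*(‖Ap.eval z‖^2 * (‖P₀.eval z‖ * ‖deriv (deriv T) z‖
              + ‖(derivative (derivative P₀)).eval z‖ * ‖T z‖)) * ‖z‖^(n+3) := by
            linarith [mul_le_mul_of_nonneg_right step3 hp]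
        _ = 2*‖Ap.eval z‖^2 * (‖P₀.eval z‖ * (‖deriv (deriv T) z‖ * ‖z‖^(n+3))
              + (‖z‖^2 * ‖(derivative (derivative P₀)).eval z‖) * (‖T z‖ * ‖z‖^(n+1))) := by
            ring
        _ ≤ 2*(KA*‖z‖^3)^2 * ((K0*‖z‖^n) * (3^(n+3)*(3^(n+2)*C0))
              + (K2*‖z‖^n) * C0) := by
            gcongr
        _ = ((2*(KA^2*(K0*(3^(n+3)*(3^(n+2)*C0)) + K2*C0))) * ‖z‖^3) * ‖z‖^(n+3) := by
            ring
    exact le_of_mul_le_mul_right key (by positivity)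
  have hnz : ¬(S1 = 0 ∧ S2 = 0 ∧ S3 = 0) := by
    rintro ⟨hS10, -, -⟩
    -- the Wronskian of P₀ and T vanishes identically on Ω
    have hW0 : ∀ z ∈ Ω, P₀.eval z * deriv T z - (derivative P₀).eval z * T z = 0 := by
      intro z hz
      have h := hE1 z hz
      rw [hS10] at h
      simp only [eval_zero, zero_mul] at h
      exact (mul_eq_zero.mp h.symm).resolve_left (hAΩ z hz)
    have hΩconn : IsPreconnected Ω := preconn_ext hR0
    by_cases hT0 : ∀ z ∈ Ω, T z = 0
    · obtain ⟨h10, -⟩ := hind 1 1 (fun z hz => by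
        have := hT0 z hz
        simpa using this)
      exact one_ne_zero h10
    · push_neg at hT0
      obtain ⟨z₀, hz₀Ω, hz₀⟩ := hT0
      have hTc : ContinuousAt T z₀ :=
        (hTdiff.differentiableAt (hΩopen.mem_nhds hz₀Ω)).continuousAt
      have hne : ∀ᶠ y in nhds z₀, T y ≠ 0 := hTc.eventually_ne hz₀
      obtain ⟨ε, hε, hball⟩ : ∃ ε > 0, Metric.ball z₀ ε ⊆ Ω ∩ {y | T y ≠ 0} := by
        have hmem : Ω ∩ {y | T y ≠ 0} ∈ nhds z₀ :=
          Filter.inter_mem (hΩopen.mem_nhds hz₀Ω) hne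
        exact Metric.mem_nhds_iff.mp hmem
      set c : ℂ := P₀.eval z₀ / T z₀ with hcdef
      -- the quotient P₀ / T is constant on the ball
      have hq : ∀ y ∈ Metric.ball z₀ ε, HasDerivAt (fun y => P₀.eval y / T y) 0 y := by
        intro y hy
        have hyΩ : y ∈ Ω := (hball hy).1
        have hyT : T y ≠ 0 := (hball hy).2
        have hTd : HasDerivAt T (deriv T y) y :=
          (hTdiff.differentiableAt (hΩopen.mem_nhds hyΩ)).hasDerivAt
        have h := (P₀.hasDerivAt y).div hTd hyT
        have hval : ((derivative P₀).eval y * T y - P₀.eval y * deriv T y) / T y ^ 2 = 0 := by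
          have hw := hW0 y hyΩ
          have : (derivative P₀).eval y * T y - P₀.eval y * deriv T y = 0 := by
            linear_combination -hw
          rw [this, zero_div]
        rwa [hval] at h
      have hconst : ∀ y ∈ Metric.ball z₀ ε, P₀.eval y - c * T y = 0 := by
        intro y hy
        have hdiff : DifferentiableOn ℂ (fun y => P₀.eval y / T y) (Metric.ball z₀ ε) :=
          fun u hu => ((hq u hu).differentiableAt).differentiableWithinAt
        have hfd : ∀ u ∈ Metric.ball z₀ ε,
            fderivWithin ℂ (fun y => P₀.eval y / T y) (Metric.ball z₀ ε) u = 0 := by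
          intro u hu
          have h0 : HasFDerivAt (fun y => P₀.eval y / T y)
              (ContinuousLinearMap.smulRight (1 : ℂ →L[ℂ] ℂ) 0) u := (hq u hu).hasFDerivAt
          rw [(h0.hasFDerivWithinAt).fderivWithin (Metric.isOpen_ball.uniqueDiffWithinAt hu)]
          exact ContinuousLinearMap.ext fun x => by simp
        have heqq := (convex_ball z₀ ε).is_const_of_fderivWithin_eq_zero hdiff hfd hy
          (Metric.mem_ball_self hε)
        have hyT : T y ≠ 0 := (hball hy).2
        have : P₀.eval y / T y = c := by rw [hcdef]; exact heqq
        field_simp at this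
        linear_combination this
      -- identity theorem: P₀ - c • T vanishes on all of Ω
      have hGdiff : DifferentiableOn ℂ (fun y => P₀.eval y - c * T y) Ω :=
        (P₀.differentiable.differentiableOn).sub ((hTdiff.const_smul c).congr
          (fun y _ => by simp [smul_eq_mul]))
      have hGan : AnalyticOnNhd ℂ (fun y => P₀.eval y - c * T y) Ω :=
        hGdiff.analyticOnNhd hΩopen
      have hzero : Set.EqOn (fun y => P₀.eval y - c * T y) 0 Ω := by
        refine hGan.eqOn_zero_of_preconnected_of_eventuallyEq_zero hΩconn hz₀Ω ?_
        refine Filter.eventuallyEq_of_mem (Metric.ball_mem_nhds z₀ hε) (fun y hy => ?_)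
        exact hconst y hy
      obtain ⟨hc1, hc2⟩ := hind (1 - c) (-c) (fun z hz => by
        have h := hzero (show z ∈ Ω from hz)
        simp only [Pi.zero_apply] at h
        have hTz : T z = P₀.eval z + P₁.eval z * f z := rfl
        rw [hTz] at h
        linear_combination h)
      have : c = 0 := by linear_combination -hc2
      rw [this] at hc1
      simp at hc1
  refine ⟨S1, S2, S3, hd1, hd2, hd3, hnz, ?_⟩
  intro U hUopen hUsub g hgdiff hgode w hw z hz
  have hAU : ∀ y ∈ U, Ap.eval y ≠ 0 := by
    intro y hy
    rw [hApev]
    exact Finset.prod_ne_zero_iff.mpr fun j _ => sub_ne_zero.mpr (hUsub hy j)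
  have hodeU : ∀ y ∈ U, Ap.eval y * deriv g y = Bp.eval y * g y := by
    intro y hy; rw [hApev, hBpev]; exact hgode y hy
  have hA := hAU z hz
  rw [← hApev]
  have key : ∀ P Q : Polynomial ℂ, w = (fun y => P.eval y + Q.eval y * g y) →
      (S1 * (Ap^2 * derivative (derivative P)) + S3 * (Ap * derivative P)
        + S2 * (Ap * P) = 0) →
      (S1 * (Ap^2 * derivative (derivative Q) + 2*Ap*Bp*derivative Q + Cp * Q)
        + S3 * (Ap * derivative Q + Bp * Q) + S2 * (Ap * Q) = 0) →
      Ap.eval z * S1.eval z * iteratedDeriv 2 w z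
        + S3.eval z * deriv w z + S2.eval z * w z = 0 := by
    intro P Q hwPQ hJP hKQ
    subst hwPQ
    obtain ⟨e1, e2⟩ := master hUopen Ap Bp hAU g hgdiff hodeU P Q z hz
    have hJz := congrArg (Polynomial.eval z) hJP
    have hKz := congrArg (Polynomial.eval z) hKQ
    have hCz : Cp.eval z = Ap.eval z * (derivative Bp).eval z
        - (derivative Ap).eval z * Bp.eval z + (Bp.eval z)^2 := by
      rw [hCpdef]; simp [eval_add, eval_mul, eval_sub, eval_pow]
    simp only [eval_add, eval_mul, eval_sub, eval_pow, eval_neg, eval_ofNat, eval_zero,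
      hCz] at hJz hKz e1 e2 ⊢
    refine mul_left_cancel₀ (pow_ne_zero 2 hA) ?_
    rw [mul_zero]
    linear_combination (Ap.eval z * S1.eval z) * e2 + (Ap.eval z * S3.eval z) * e1
      + Ap.eval z * hJz + (Ap.eval z * g z) * hKz
  rcases hw with rfl | rfl | rfl
  · refine key P₀ 0 (by funext y; simp) (by simpa using hJ) (by simp)
  · refine key 0 P₁ (by funext y; simp) (by simp) (by simpa using hK)
  · exact key P₀ P₁ rfl hJ hK
end

section
/- The function ρ(x) = (√3 / (2π)) · (x^2 − 1)^{−1/3} · ((|x| − 1)^{−1/3} − (|x| + 1)^{−1/3}), defined for real x with |x| > 1, is nonnegative and satisfies ∫_{{x ∈ ℝ : |x| > 1}} ρ(x) dx = 1; that is, ρ is the density of a probability measure on ℝ \ [−1, 1]. -/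
/-- The limiting zero-distribution density
`ρ(x) = (√3/(2π)) (x²−1)^{−1/3} ((|x|−1)^{−1/3} − (|x|+1)^{−1/3})`, `|x| > 1`
(all cube roots are the real positive cube roots of positive reals, via `rpow`). -/
noncomputable def limitDensity (x : ℝ) : ℝ :=
  (Real.sqrt 3 / (2 * Real.pi)) * (x ^ 2 - 1) ^ (-(1 : ℝ) / 3) *
    ((|x| - 1) ^ (-(1 : ℝ) / 3) - (|x| + 1) ^ (-(1 : ℝ) / 3))

open Real MeasureTheory Set Filter Topology

noncomputable def Fcdf (x : ℝ) : ℝ :=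
  (3 / Real.pi) * Real.arctan ((2 * ((x - 1) / (x + 1)) ^ ((1:ℝ)/3) + 1) / Real.sqrt 3)

lemma Fcdf_hasDerivAt {x : ℝ} (hx : 1 < x) : HasDerivAt Fcdf (limitDensity x) x := by
  have hP : (0:ℝ) < x - 1 := by linarith
  have hQ : (0:ℝ) < x + 1 := by linarith
  have hu : (0:ℝ) < (x - 1) / (x + 1) := div_pos hP hQ
  set A := (x - 1) ^ ((1:ℝ)/3) with hA
  set B := (x + 1) ^ ((1:ℝ)/3) with hB
  have hApos : 0 < A := Real.rpow_pos_of_pos hP _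
  have hBpos : 0 < B := Real.rpow_pos_of_pos hQ _
  have hA3 : A ^ 3 = x - 1 := by
    rw [hA, ← Real.rpow_natCast (_ ^ _) 3, ← Real.rpow_mul hP.le]; norm_num
  have hB3 : B ^ 3 = x + 1 := by
    rw [hB, ← Real.rpow_natCast (_ ^ _) 3, ← Real.rpow_mul hQ.le]; norm_num
  -- derivative of u
  have hdu : HasDerivAt (fun y : ℝ => (y - 1) / (y + 1))
      ((1 * (x + 1) - (x - 1) * 1) / (x + 1) ^ 2) x := by
    exact ((hasDerivAt_id x).sub_const 1).div ((hasDerivAt_id x).add_const 1) (by linarith)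
  have hdv := hdu.rpow_const (p := (1:ℝ)/3) (Or.inl (ne_of_gt hu))
  have hdw := (((hdv.const_mul 2).add_const 1).div_const (Real.sqrt 3)).arctan
  have hD := hdw.const_mul (3 / Real.pi)
  refine hD.congr_deriv (Eq.symm ?_)
  -- now prove the value equality
  have huv : ((x - 1) / (x + 1)) ^ ((1:ℝ)/3) = A / B := Real.div_rpow hP.le hQ.le _
  have he1 : ((x - 1) / (x + 1)) ^ ((1:ℝ)/3 - 1) = (A / B) * ((x + 1) / (x - 1)) := by
    rw [Real.rpow_sub hu, Real.rpow_one, huv]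
    field_simp
  have h3 : Real.sqrt 3 ^ 2 = 3 := Real.sq_sqrt (by norm_num)
  have e2 : 1 + ((2 * (A/B) + 1) / Real.sqrt 3) ^ 2 = (4*(A^2+A*B+B^2))/(3*B^2) := by
    rw [div_pow, h3]; field_simp; ring
  have hx2 : (x:ℝ)^2 - 1 = (x-1)*(x+1) := by ring
  have habs : |x| = x := abs_of_pos (by linarith)
  have hne : (-(1:ℝ)/3) = -((1:ℝ)/3) := by norm_num
  have hdiff : B^3 - A^3 = 2 := by rw [hA3, hB3]; ring
  have hSpos : (0:ℝ) < A^2 + A*B + B^2 := by positivity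
  rw [limitDensity, habs, hx2, hne, Real.mul_rpow hP.le hQ.le,
      Real.rpow_neg hP.le, Real.rpow_neg hQ.le, huv, he1, e2, ← hA3, ← hB3]
  have hAA : ((A:ℝ)^3) ^ ((1:ℝ)/3) = A := by rw [hA3]
  have hBB : ((B:ℝ)^3) ^ ((1:ℝ)/3) = B := by rw [hB3]
  field_simp
  rw [hAA, hBB]
  linear_combination ((B - A) * (Real.pi * (4 * (A^2+A*B+B^2) * ((B^3)^2 * 3 * (B*A^3)))) + (4*A^2*B^5 - 12*Real.pi*A^3*B^10 - 4*A^5*B^2 + 12*Real.pi*A^6*B^7)) * h3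

lemma limitDensity_nonneg {x : ℝ} (hx : 1 < |x|) : 0 ≤ limitDensity x := by
  have h1 : (0:ℝ) < x ^ 2 - 1 := by
    have : (1:ℝ) < |x| ^ 2 := by nlinarith
    rw [sq_abs] at this; linarith
  have h2 : (0:ℝ) < |x| - 1 := by linarith
  refine mul_nonneg (mul_nonneg ?_ (Real.rpow_nonneg h1.le _)) ?_
  · positivity
  · rw [sub_nonneg]
    exact Real.rpow_le_rpow_of_nonpos h2 (by linarith) (by norm_num)

lemma arctan_sqrt3 : Real.arctan (Real.sqrt 3) = Real.pi / 3 := by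
  rw [← Real.tan_pi_div_three]
  exact Real.arctan_tan (by linarith [Real.pi_pos]) (by linarith [Real.pi_pos])

lemma arctan_inv_sqrt3 : Real.arctan (1 / Real.sqrt 3) = Real.pi / 6 := by
  rw [← Real.tan_pi_div_six]
  exact Real.arctan_tan (by linarith [Real.pi_pos]) (by linarith [Real.pi_pos])

lemma Fcdf_tendsto_atTop : Tendsto Fcdf atTop (𝓝 1) := by
  have hu : Tendsto (fun x : ℝ => (x - 1) / (x + 1)) atTop (𝓝 1) := by
    have h2 : Tendsto (fun x : ℝ => 1 - 2 / (x + 1)) atTop (𝓝 (1 - 0)) := by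
      exact tendsto_const_nhds.sub
        (tendsto_const_nhds.div_atTop (tendsto_atTop_add_const_right _ 1 tendsto_id))
    rw [sub_zero] at h2
    apply h2.congr'
    filter_upwards [Ioi_mem_atTop (1:ℝ)] with x hx
    have : x + 1 ≠ 0 := by simp only [mem_Ioi] at hx; linarith
    field_simp
    ring
  have hv : Tendsto (fun x : ℝ => ((x - 1) / (x + 1)) ^ ((1:ℝ)/3)) atTop (𝓝 1) := by
    have := (Real.continuousAt_rpow_const 1 ((1:ℝ)/3) (Or.inl one_ne_zero)).tendsto.comp hu
    simpa [Function.comp_def] using this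
  have harg : Tendsto (fun x : ℝ => (2 * ((x - 1) / (x + 1)) ^ ((1:ℝ)/3) + 1) / Real.sqrt 3)
      atTop (𝓝 (Real.sqrt 3)) := by
    have h3 : Real.sqrt 3 ≠ 0 := by positivity
    have := ((hv.const_mul 2).add_const 1).div_const (Real.sqrt 3)
    have he : (2 * 1 + 1) / Real.sqrt 3 = Real.sqrt 3 := by
      rw [div_eq_iff h3, Real.mul_self_sqrt (by norm_num : (0:ℝ) ≤ 3)]; norm_num
    rwa [he] at this
  have := ((Real.continuous_arctan.tendsto _).comp harg).const_mul (3 / Real.pi)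
  rw [arctan_sqrt3] at this
  have hpi : (3 / Real.pi) * (Real.pi / 3) = 1 := by
    field_simp
  unfold Fcdf
  rwa [hpi] at this

lemma Fcdf_one : Fcdf 1 = 1 / 2 := by
  unfold Fcdf
  rw [show ((1:ℝ) - 1) / (1 + 1) = 0 by norm_num, Real.zero_rpow (by norm_num : (1:ℝ)/3 ≠ 0)]
  rw [show (2 * (0:ℝ) + 1) / Real.sqrt 3 = 1 / Real.sqrt 3 by ring, arctan_inv_sqrt3]
  field_simp
  ring

lemma Fcdf_contWithin : ContinuousWithinAt Fcdf (Ici 1) 1 := by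
  apply ContinuousAt.continuousWithinAt
  have hbase : ContinuousAt (fun x : ℝ => (x - 1) / (x + 1)) 1 :=
    ContinuousAt.div (by fun_prop) (by fun_prop) (by norm_num)
  have hrpow : ContinuousAt (fun x : ℝ => ((x - 1) / (x + 1)) ^ ((1:ℝ)/3)) 1 :=
    (Real.continuousAt_rpow_const _ _ (Or.inr (by norm_num))).comp hbase
  exact continuousAt_const.mul ((Real.continuous_arctan.continuousAt).comp
    (((hrpow.const_mul 2).add continuousAt_const).div_const _))

lemma integral_Ioi_one : ∫ x in Ioi (1:ℝ), limitDensity x = 1 / 2 := by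
  have := integral_Ioi_of_hasDerivAt_of_nonneg Fcdf_contWithin
    (fun x hx => Fcdf_hasDerivAt hx) (fun x hx => limitDensity_nonneg (by
      rw [abs_of_pos (by linarith [mem_Ioi.mp hx] : (0:ℝ) < x)]; exact hx)) Fcdf_tendsto_atTop
  rw [this, Fcdf_one]; norm_num

lemma integrableOn_Ioi_one : IntegrableOn limitDensity (Ioi (1:ℝ)) := by
  exact integrableOn_Ioi_deriv_of_nonneg Fcdf_contWithin
    (fun x hx => Fcdf_hasDerivAt hx) (fun x hx => limitDensity_nonneg (by
      rw [abs_of_pos (by linarith [mem_Ioi.mp hx] : (0:ℝ) < x)]; exact hx)) Fcdf_tendsto_atTop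

lemma limitDensity_even (x : ℝ) : limitDensity (-x) = limitDensity x := by
  simp [limitDensity, neg_sq, abs_neg]

lemma integrableOn_Iio_neg_one : IntegrableOn limitDensity (Iio (-1:ℝ)) := by
  have h := (MeasurePreserving.integrableOn_comp_preimage
    (Measure.measurePreserving_neg (volume : Measure ℝ))
    (Homeomorph.neg ℝ).measurableEmbedding).2 integrableOn_Ioi_one
  have hs : (Neg.neg ⁻¹' Ioi (1:ℝ) : Set ℝ) = Iio (-1) := by
    ext x; simp only [mem_preimage, mem_Ioi, mem_Iio]; constructor <;> intro <;> linarith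
  have hf : (limitDensity ∘ Neg.neg) = limitDensity := funext fun x => limitDensity_even x
  rwa [hs, hf] at h

lemma integral_Iio_neg_one : ∫ x in Iio (-1:ℝ), limitDensity x = 1 / 2 := by
  rw [setIntegral_congr_set Iio_ae_eq_Iic, ← integral_comp_neg_Ioi]
  simp_rw [limitDensity_even]
  exact integral_Ioi_one

/-- The function `ρ = limitDensity` is nonnegative on `{|x| > 1}` and
`∫_{|x|>1} ρ(x) dx = 1`; i.e. `ρ` is the density of a probability measure on
`ℝ \ [−1, 1]`. -/
theorem stmt_15 :
    (∀ x : ℝ, 1 < |x| → 0 ≤ limitDensity x) ∧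
    ∫ x in {x : ℝ | 1 < |x|}, limitDensity x = 1 := by
  refine ⟨fun x hx => limitDensity_nonneg hx, ?_⟩
  have hset : {x : ℝ | 1 < |x|} = Iio (-1) ∪ Ioi 1 := by
    ext x
    simp only [mem_setOf_eq, lt_abs, mem_union, mem_Iio, mem_Ioi]
    constructor
    · rintro (h | h)
      exacts [Or.inr h, Or.inl (by linarith)]
    · rintro (h | h)
      exacts [Or.inr (by linarith), Or.inl h]
  have hdisj : Disjoint (Iio (-1:ℝ)) (Ioi 1) := by
    rw [Set.disjoint_left]
    intro a ha hb
    simp only [mem_Iio, mem_Ioi] at *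
    linarith
  rw [hset, setIntegral_union hdisj measurableSet_Ioi integrableOn_Iio_neg_one
    integrableOn_Ioi_one, integral_Iio_neg_one, integral_Ioi_one]
  norm_num
end

section
/- For every z ∈ ℂ \ [−1, 1], ∫_{−1}^{1} √(1 − x^2) / (z − x) dx = π (z − √(z^2 − 1)), where √(z^2 − 1) denotes the branch holomorphic on ℂ \ [−1, 1] satisfying √(z^2 − 1)/z → 1 as z → ∞. -/
open Complex Set Filter intervalIntegral

lemma aux_ne_one (ζ w : ℂ) (h : ¬(ζ.im = 0 ∧ -1 ≤ ζ.re ∧ ζ.re ≤ 1))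
    (hw : w ^ 2 = ζ ^ 2 - 1) : ‖ζ - w‖ ≠ 1 := by
  intro hn
  set a := ζ - w with ha
  have hab : a * (ζ + w) = 1 := by rw [ha]; linear_combination -hw
  have ha0 : a ≠ 0 := by
    intro h0; rw [h0, zero_mul] at hab; exact one_ne_zero hab.symm
  have hmc : a * (starRingEnd ℂ) a = 1 := by
    rw [Complex.mul_conj]
    norm_cast
    rw [Complex.normSq_eq_norm_sq, hn]; norm_num
  have hconj : ζ + w = (starRingEnd ℂ) a := mul_left_cancel₀ ha0 (hab.trans hmc.symm)
  have hζ : ζ = (a + (starRingEnd ℂ) a) / 2 := by rw [← hconj, ha]; ring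
  apply h
  constructor
  · rw [hζ]; simp [Complex.add_im, Complex.conj_im]
  · have hre : ζ.re = a.re := by rw [hζ]; simp [Complex.add_re, Complex.conj_re]
    have := Complex.abs_re_le_norm a
    rw [hn] at this
    constructor <;> rw [hre] <;> [linarith [abs_le.mp this]; linarith [abs_le.mp this]]

lemma delta_lt_one
    (s : ℂ → ℂ)
    (hs : DifferentiableOn ℂ s {z : ℂ | ¬(z.im = 0 ∧ -1 ≤ z.re ∧ z.re ≤ 1)})
    (hs2 : ∀ z : ℂ, ¬(z.im = 0 ∧ -1 ≤ z.re ∧ z.re ≤ 1) → (s z) ^ 2 = z ^ 2 - 1)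
    (hsinf : Filter.Tendsto (fun z => s z / z) (Bornology.cobounded ℂ) (nhds 1))
    (z : ℂ) (hz : ¬(z.im = 0 ∧ -1 ≤ z.re ∧ z.re ≤ 1)) : ‖z - s z‖ < 1 := by
  set S : Set ℂ := {z : ℂ | ¬(z.im = 0 ∧ -1 ≤ z.re ∧ z.re ≤ 1)} with hS
  have hSopen : IsOpen S := by
    rw [hS]
    have : IsClosed {z : ℂ | z.im = 0 ∧ -1 ≤ z.re ∧ z.re ≤ 1} := by
      apply IsClosed.inter
      · exact isClosed_eq Complex.continuous_im continuous_const
      · exact IsClosed.inter (isClosed_le continuous_const Complex.continuous_re)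
          (isClosed_le Complex.continuous_re continuous_const)
    exact this.isOpen_compl
  have hz0 : z ≠ 0 := by
    intro h0; apply hz; rw [h0]; norm_num
  have hray : ∀ t : ℝ, 1 ≤ t → ((t : ℂ) * z) ∈ S := by
    intro t ht
    simp only [hS, mem_setOf_eq] at hz ⊢
    intro ⟨him, hre1, hre2⟩
    have htpos : (0:ℝ) < t := lt_of_lt_of_le one_pos ht
    have him' : (((t:ℂ)) * z).im = t * z.im := by simp [Complex.mul_im]
    have hre' : (((t:ℂ)) * z).re = t * z.re := by simp [Complex.mul_re]
    rw [him'] at him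
    have hzim : z.im = 0 := by
      rcases mul_eq_zero.mp him with h | h
      · linarith
      · exact h
    apply hz
    refine ⟨hzim, ?_, ?_⟩
    · rw [hre'] at hre1
      nlinarith
    · rw [hre'] at hre2
      nlinarith
  -- the ray tends to cobounded
  have hg : Tendsto (fun t : ℝ => (t : ℂ) * z) atTop (Bornology.cobounded ℂ) := by
    rw [← tendsto_norm_atTop_iff_cobounded]
    have : ∀ t : ℝ, ‖(t:ℂ) * z‖ = |t| * ‖z‖ := by
      intro t; rw [norm_mul, Complex.norm_real]; rfl
    simp only [this]
    exact (tendsto_abs_atTop_atTop.atTop_mul_const (norm_pos_iff.mpr hz0))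
  have hratio : Tendsto (fun t : ℝ => s ((t:ℂ) * z) / ((t:ℂ) * z)) atTop (nhds 1) :=
    hsinf.comp hg
  -- norm of sum tends to atTop
  have hsum : Tendsto (fun t : ℝ => ‖(t:ℂ) * z + s ((t:ℂ) * z)‖) atTop atTop := by
    have h2 : Tendsto (fun t : ℝ => ‖(1 : ℂ) + s ((t:ℂ) * z) / ((t:ℂ) * z)‖) atTop (nhds 2) := by
      have : Tendsto (fun t : ℝ => (1 : ℂ) + s ((t:ℂ) * z) / ((t:ℂ) * z)) atTop (nhds 2) := by
        have := (tendsto_const_nhds (x := (1:ℂ)) (f := atTop (α := ℝ))).add hratio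
        norm_num at this; exact this
      have := this.norm
      norm_num at this; exact this
    have h1 : Tendsto (fun t : ℝ => ‖(t:ℂ) * z‖) atTop atTop := by
      rw [tendsto_norm_atTop_iff_cobounded]; exact hg
    have := h1.atTop_mul_pos (by norm_num : (0:ℝ) < 2) h2
    apply this.congr'
    filter_upwards [eventually_ge_atTop (1:ℝ)] with t ht
    have htz : (t:ℂ) * z ≠ 0 := by
      apply mul_ne_zero _ hz0
      simp only [ne_eq, Complex.ofReal_eq_zero]
      linarith
    rw [← norm_mul]
    congr 1
    rw [mul_add, mul_one, mul_div_cancel₀ _ htz]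
  -- the full difference function
  set f : ℝ → ℝ := fun t => ‖(t:ℂ) * z - s ((t:ℂ) * z)‖ with hf
  have hfeq : ∀ t : ℝ, 1 ≤ t → f t = ‖(t:ℂ) * z + s ((t:ℂ) * z)‖⁻¹ := by
    intro t ht
    have hmem := hray t ht
    have hsq := hs2 _ hmem
    have hprod : ((t:ℂ) * z - s ((t:ℂ) * z)) * ((t:ℂ) * z + s ((t:ℂ) * z)) = 1 := by
      linear_combination -hsq
    have := congrArg norm hprod
    rw [norm_mul, norm_one] at this
    have hpos : ‖(t:ℂ) * z + s ((t:ℂ) * z)‖ ≠ 0 := by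
      intro h0; rw [h0, mul_zero] at this; norm_num at this
    exact eq_inv_of_mul_eq_one_left this
  have htend : Tendsto f atTop (nhds 0) := by
    apply Tendsto.congr' _ hsum.inv_tendsto_atTop
    filter_upwards [eventually_ge_atTop (1:ℝ)] with t ht
    exact (hfeq t ht).symm
  have hfcont : ContinuousOn f (Ici 1) := by
    apply ContinuousOn.norm
    apply ContinuousOn.sub
    · exact (Complex.continuous_ofReal.mul continuous_const).continuousOn
    · apply (hs.continuousOn).comp
        ((Complex.continuous_ofReal.mul continuous_const).continuousOn)
      intro t ht
      exact hray t ht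
  have hne : ∀ t : ℝ, 1 ≤ t → f t ≠ 1 := by
    intro t ht
    exact aux_ne_one _ _ (hray t ht) (hs2 _ (hray t ht))
  -- conclude f 1 < 1
  by_contra hc
  push_neg at hc
  have hf1 : f 1 = ‖z - s z‖ := by simp [hf]
  have h1 : 1 < f 1 := by
    rw [hf1]
    exact lt_of_le_of_ne hc (fun h => hne 1 le_rfl (hf1.trans h.symm))
  have hev : ∀ᶠ t in atTop, f t < 1 := htend.eventually_lt_const one_pos
  obtain ⟨T, hT1, hTlt⟩ : ∃ T : ℝ, 1 ≤ T ∧ f T < 1 := by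
    obtain ⟨T, hT⟩ := (hev.and (eventually_ge_atTop (1:ℝ))).exists
    exact ⟨T, hT.2, hT.1⟩
  have hsub : Icc (1:ℝ) T ⊆ Ici 1 := Icc_subset_Ici_self
  have hivt := intermediate_value_Icc' hT1 (hfcont.mono hsub)
  have h1mem : (1:ℝ) ∈ Icc (f T) (f 1) := ⟨le_of_lt hTlt, le_of_lt h1⟩
  obtain ⟨c, hc1, hc2⟩ := hivt h1mem
  exact hne c hc1.1 hc2

/-- For every `z ∈ ℂ \ [−1,1]`,
`∫_{−1}^{1} √(1−x²)/(z−x) dx = π (z − √(z²−1))`, where `s = √(·²−1)` is the branch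
holomorphic on `ℂ \ [−1,1]` with `s(z)/z → 1` as `z → ∞`. -/
theorem stmt_16
    (s : ℂ → ℂ)
    (hs : DifferentiableOn ℂ s {z : ℂ | ¬(z.im = 0 ∧ -1 ≤ z.re ∧ z.re ≤ 1)})
    (hs2 : ∀ z : ℂ, ¬(z.im = 0 ∧ -1 ≤ z.re ∧ z.re ≤ 1) → (s z) ^ 2 = z ^ 2 - 1)
    (hsinf : Filter.Tendsto (fun z => s z / z) (Bornology.cobounded ℂ) (nhds 1)) :
    ∀ z : ℂ, ¬(z.im = 0 ∧ -1 ≤ z.re ∧ z.re ≤ 1) →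
      ∫ x in (-1 : ℝ)..1, (Real.sqrt (1 - x ^ 2) : ℂ) / (z - (x : ℂ))
        = (Real.pi : ℂ) * (z - s z) := by
  intro z hz
  set w : ℂ := s z with hwdef
  have hw2 : w ^ 2 = z ^ 2 - 1 := hs2 z hz
  have hδlt : ‖z - w‖ < 1 := delta_lt_one s hs hs2 hsinf z hz
  -- z - x ≠ 0 for x in [-1,1]
  have hzx : ∀ x : ℝ, x ∈ Icc (-1:ℝ) 1 → z - (x:ℂ) ≠ 0 := by
    intro x hx h0
    have hzx' : z = (x:ℂ) := sub_eq_zero.mp h0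
    apply hz
    rw [hzx']
    refine ⟨by simp, by simpa using hx.1, by simpa using hx.2⟩
  set p : ℝ → ℂ := fun t => (I*(1 - z*t) + w*(Real.sqrt (1 - t^2) : ℝ))/(z - t) with hpdef
  -- positivity of real part on the open interval
  have hpre : ∀ x : ℝ, x ∈ Ioo (-1:ℝ) 1 → 0 < (p x).re := by
    intro x hx
    have hx2 : 0 < 1 - x^2 := by nlinarith [hx.1, hx.2]
    set Y := Real.sqrt (1 - x^2) with hYdef
    have hYpos : 0 < Y := Real.sqrt_pos.mpr hx2
    have hY2 : Y^2 = 1 - x^2 := Real.sq_sqrt hx2.le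
    have hXYr : x^2 + Y^2 = 1 := by rw [hY2]; ring
    have hXY : (x:ℂ)^2 + (Y:ℂ)^2 = 1 := by exact_mod_cast congrArg (Complex.ofReal) hXYr
    set δ := z - w with hδdef
    have hδz : δ^2 - 2*δ*z + 1 = 0 := by rw [hδdef]; linear_combination hw2
    have hnsδ : Complex.normSq δ < 1 := by
      have h1 : ‖δ‖ < 1 := by rw [hδdef]; exact hδlt
      have h2 : Complex.normSq δ = ‖δ‖^2 := by
        rw [Complex.normSq_eq_norm_sq]
      nlinarith [norm_nonneg δ]
    have hnsζ' : Complex.normSq ((x:ℂ) - (Y:ℂ)*I) = 1 := by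
      simp [Complex.normSq_apply]
      nlinarith [hXYr]
    have hnsζ : Complex.normSq ((x:ℂ) + (Y:ℂ)*I) = 1 := by
      simp [Complex.normSq_apply]
      nlinarith [hXYr]
    have hδζ' : δ - ((x:ℂ) - (Y:ℂ)*I) ≠ 0 := by
      intro h
      rw [sub_eq_zero.mp h, hnsζ'] at hnsδ
      linarith
    have hδζ : δ - ((x:ℂ) + (Y:ℂ)*I) ≠ 0 := by
      intro h
      rw [sub_eq_zero.mp h, hnsζ] at hnsδ
      linarith
    have hzx0 : z - (x:ℂ) ≠ 0 := hzx x (Ioo_subset_Icc_self hx)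
    have hclear : (I*(1 - z*(x:ℂ)) + w*(Y:ℂ)) * (δ - ((x:ℂ) - (Y:ℂ)*I))
        = -(I*((x:ℂ) - (Y:ℂ)*I)*(δ - ((x:ℂ) + (Y:ℂ)*I))*(z - (x:ℂ))) := by
      linear_combination (I*z*(Y:ℂ)^2 - I*(x:ℂ)*(Y:ℂ)^2 - δ*z*(Y:ℂ) + δ*(x:ℂ)*(Y:ℂ)
          - z*(x:ℂ)*(Y:ℂ) + (Y:ℂ)) * Complex.I_sq
        + (I*(Y:ℂ)^2 + δ*(Y:ℂ) - (x:ℂ)*(Y:ℂ)) * hδdef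
        + (-(Y:ℂ)) * hδz + (-I*δ + I*(x:ℂ)) * hXY
    have hpx : p x = -I*((x:ℂ) - (Y:ℂ)*I)*(δ - ((x:ℂ) + (Y:ℂ)*I))/(δ - ((x:ℂ) - (Y:ℂ)*I)) := by
      show (I*(1 - z*(x:ℂ)) + w*((Real.sqrt (1 - x^2) : ℝ):ℂ))/(z - (x:ℂ)) = _
      rw [← hYdef, div_eq_div_iff hzx0 hδζ']
      linear_combination hclear
    rw [hpx, Complex.div_re]
    have hnum : (-I*((x:ℂ) - (Y:ℂ)*I)*(δ - ((x:ℂ) + (Y:ℂ)*I))).re * (δ - ((x:ℂ) - (Y:ℂ)*I)).re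
        + (-I*((x:ℂ) - (Y:ℂ)*I)*(δ - ((x:ℂ) + (Y:ℂ)*I))).im * (δ - ((x:ℂ) - (Y:ℂ)*I)).im
        = Y * (1 - Complex.normSq δ) := by
      simp [Complex.normSq_apply, Complex.mul_re, Complex.mul_im, Complex.sub_re,
        Complex.sub_im, Complex.add_re, Complex.add_im, Complex.I_re, Complex.I_im,
        Complex.ofReal_re, Complex.ofReal_im, Complex.neg_re, Complex.neg_im]
      ring_nf
      linear_combination Y * hXYr
    have hden : 0 < Complex.normSq (δ - ((x:ℂ) - (Y:ℂ)*I)) := Complex.normSq_pos.mpr hδζ'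
    rw [← add_div, hnum]
    exact div_pos (mul_pos hYpos (by linarith)) hden
  -- endpoint values
  have hp1 : p 1 = -I := by
    have h1 : z - (1:ℂ) ≠ 0 := by
      have := hzx 1 (by norm_num); push_cast at this ⊢; exact this
    simp only [hpdef]
    norm_num
    rw [div_eq_iff h1]
    ring
  have hpm1 : p (-1) = I := by
    have h1 : z + 1 ≠ 0 := by
      have := hzx (-1) (by norm_num); push_cast at this; intro h; apply this; linear_combination h
    simp only [hpdef]
    norm_num
    rw [div_eq_iff h1]
    ring
  -- slit plane membership on [-1,1]
  have hslit : ∀ x : ℝ, x ∈ Icc (-1:ℝ) 1 → p x ∈ slitPlane := by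
    intro x hx
    rcases eq_or_lt_of_le hx.1 with h1 | h1
    · rw [← h1, hpm1]
      exact Or.inr (by simp)
    rcases eq_or_lt_of_le hx.2 with h2 | h2
    · rw [h2, hp1]
      exact Or.inr (by simp)
    · exact Or.inl (hpre x ⟨h1, h2⟩)
  -- the antiderivative
  set F : ℝ → ℂ := fun t =>
      -I*w*Complex.log (p t) + z*(Real.arcsin t : ℝ) - (Real.sqrt (1 - t^2) : ℝ) with hFdef
  -- continuity
  have hsqrtc : Continuous (fun t : ℝ => (Real.sqrt (1 - t^2) : ℂ)) := by
    exact Complex.continuous_ofReal.comp (Real.continuous_sqrt.comp (continuous_const.sub (continuous_pow 2)))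
  have hpc : ContinuousOn p (Icc (-1:ℝ) 1) := by
    apply ContinuousOn.div
    · apply ContinuousOn.add
      · exact (continuous_const.mul (continuous_const.sub
          (continuous_const.mul Complex.continuous_ofReal))).continuousOn
      · exact (continuous_const.mul hsqrtc).continuousOn
    · exact (continuous_const.sub Complex.continuous_ofReal).continuousOn
    · exact hzx
  have hFc : ContinuousOn F (Icc (-1:ℝ) 1) := by
    apply ContinuousOn.sub
    apply ContinuousOn.add
    · exact continuousOn_const.mul (hpc.clog hslit)
    · exact (continuous_const.mul (Complex.continuous_ofReal.comp
        Real.continuous_arcsin)).continuousOn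
    · exact hsqrtc.continuousOn
  -- derivative on the interior
  have hF : ∀ x ∈ Ioo (-1:ℝ) 1, HasDerivAt F ((Real.sqrt (1 - x^2) : ℂ)/(z - x)) x := by
    intro x hx
    have hx2 : 0 < 1 - x^2 := by nlinarith [hx.1, hx.2]
    set Y := Real.sqrt (1 - x^2) with hYdef
    have hYpos : 0 < Y := Real.sqrt_pos.mpr hx2
    have hY2 : Y^2 = 1 - x^2 := Real.sq_sqrt hx2.le
    have hY0 : Y ≠ 0 := ne_of_gt hYpos
    have hYC : (Y:ℂ) ≠ 0 := by exact_mod_cast hY0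
    have hY2C : (Y:ℂ)^2 = 1 - (x:ℂ)^2 := by exact_mod_cast congrArg Complex.ofReal hY2
    have hzx0 : z - (x:ℂ) ≠ 0 := hzx x (Ioo_subset_Icc_self hx)
    have hsq : HasDerivAt (fun t : ℝ => Real.sqrt (1 - t^2)) (-x/Y) x := by
      have h1 : HasDerivAt (fun t : ℝ => 1 - t^2) (-(2*x)) x := by
        simpa using ((hasDerivAt_pow 2 x).const_sub 1)
      have h2 := (Real.hasDerivAt_sqrt (ne_of_gt hx2)).comp x h1
      refine h2.congr_deriv (Eq.symm ?_)
      rw [← hYdef]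
      field_simp
    have hsqC : HasDerivAt (fun t : ℝ => ((Real.sqrt (1 - t^2) : ℝ) : ℂ)) ((-x/Y : ℝ) : ℂ) x :=
      hsq.ofReal_comp
    have hid : HasDerivAt (fun t : ℝ => ((t : ℝ) : ℂ)) 1 x := by
      simpa using (hasDerivAt_id x).ofReal_comp
    have hN := (((hid.const_mul z).const_sub 1).const_mul I).add (hsqC.const_mul w)
    have hD := hid.const_sub z
    have hp'' : HasDerivAt p
        (((I * -(z * 1) + w * ((-x/Y : ℝ):ℂ)) * (z - (x:ℂ)) -
          (I * (1 - z * (x:ℂ)) + w * ((Real.sqrt (1 - x^2) : ℝ):ℂ)) * -1) / (z - (x:ℂ))^2) x := by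
      rw [hpdef]
      exact hN.div hD hzx0
    have hpx0 : p x ≠ 0 := by
      intro h
      have h2 := hpre x hx
      rw [h] at h2
      simp at h2
    have hpxval : p x = (I * (1 - z * (x:ℂ)) + w * ((Y : ℝ):ℂ)) / (z - (x:ℂ)) := by
      rw [hpdef]
    have hN0 : I * (1 - z * (x:ℂ)) + w * ((Y : ℝ):ℂ) ≠ 0 := by
      intro h
      apply hpx0
      rw [hpxval, h, zero_div]
    have hw0 : w ≠ 0 := by
      intro h
      rw [h] at hw2
      have hz2 : z^2 = 1 := by linear_combination -hw2
      have : (z - 1)*(z + 1) = 0 := by linear_combination hz2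
      rcases mul_eq_zero.mp this with h1 | h1
      · exact hz (by rw [sub_eq_zero.mp h1]; norm_num)
      · have : z = -1 := by linear_combination h1
        exact hz (by rw [this]; norm_num)
    have hp2 : HasDerivAt p (I*(1 - z^2)/(w*(Y:ℂ)*(z - (x:ℂ))) * p x) x := by
      convert hp'' using 1
      rw [hpxval, ← hYdef]
      push_cast
      field_simp [hw0, hYC, hzx0]
      linear_combination (1 - z^2)*(1 - z*(x:ℂ))*Complex.I_sq - ((x:ℂ)^2 - (x:ℂ)*z + (Y:ℂ)^2)*hw2
        - (z^2 - 1)*hY2C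
    have hlog := hp2.clog_real (Or.inl (hpre x hx))
    have hlog2 : HasDerivAt (fun t => Complex.log (p t)) (I*(1 - z^2)/(w*(Y:ℂ)*(z - (x:ℂ)))) x := by
      convert hlog using 1
      exact (mul_div_cancel_right₀ _ hpx0).symm
    have harc : HasDerivAt Real.arcsin (1/Real.sqrt (1 - x^2)) x :=
      Real.hasDerivAt_arcsin (hx.1).ne' (hx.2).ne
    have hFd := ((hlog2.const_mul (-I*w)).add ((harc.ofReal_comp).const_mul z)).sub hsqC
    have hterm : -I*w*(I*(1 - z^2)/(w*((Y:ℝ):ℂ)*(z - (x:ℂ))))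
        = (1 - z^2)/(((Y:ℝ):ℂ)*(z - (x:ℂ))) := by
      have h1 : -I*w*(I*(1 - z^2)/(w*((Y:ℝ):ℂ)*(z - (x:ℂ))))
          = (-I*I)*(w*((1 - z^2)/(w*(((Y:ℝ):ℂ)*(z - (x:ℂ)))))) := by ring
      rw [h1, mul_div_assoc', mul_div_mul_left _ _ hw0]
      simp [Complex.I_mul_I]
    rw [hFdef]
    refine hFd.congr_deriv (Eq.symm ?_)
    rw [← hYdef]
    push_cast
    rw [hterm]
    field_simp [hYC, hzx0]
    linear_combination hY2C
  -- integrability of the integrand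
  have hint : IntervalIntegrable (fun x : ℝ => (Real.sqrt (1 - x^2) : ℂ)/(z - x))
      MeasureTheory.volume (-1 : ℝ) 1 := by
    apply ContinuousOn.intervalIntegrable
    rw [uIcc_of_le (by norm_num : (-1:ℝ) ≤ 1)]
    exact ContinuousOn.div hsqrtc.continuousOn
      ((continuous_const.sub Complex.continuous_ofReal).continuousOn) hzx
  have hftc := intervalIntegral.integral_eq_sub_of_hasDeriv_right_of_le
    (by norm_num : (-1:ℝ) ≤ 1) hFc
    (fun x hx => (hF x hx).hasDerivWithinAt) hint
  rw [hftc]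
  -- compute endpoint values
  have hs1 : Real.sqrt (1 - (1:ℝ)^2) = 0 := by norm_num
  have hsm1 : Real.sqrt (1 - (-1:ℝ)^2) = 0 := by norm_num
  simp only [hFdef]
  rw [hp1, hpm1, Complex.log_neg_I, Complex.log_I]
  rw [Real.arcsin_one, Real.arcsin_neg_one]
  push_cast [hs1, hsm1]
  ring_nf
  linear_combination (w * (Real.pi:ℂ)) * Complex.I_sq
end

section
/- Let T_n denote the nth Chebyshev polynomial of the first kind, characterized by T_n(cos θ) = cos(nθ). For every z ∈ ℂ \ [−1, 1] and every n ≥ 0, ∫_{−1}^{1} T_n(x) / ((z − x) √(1 − x^2)) dx = π / (√(z^2 − 1) · (z + √(z^2 − 1))^n), where √(z^2 − 1) denotes the branch holomorphic on ℂ \ [−1, 1] satisfying √(z^2 − 1)/z → 1 as z → ∞. -/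
open Complex Set

def U : Set ℂ := {z : ℂ | ¬(z.im = 0 ∧ -1 ≤ z.re ∧ z.re ≤ 1)}

lemma hUopen : IsOpen U := by
  rw [show U = ({z : ℂ | z.im = 0 ∧ -1 ≤ z.re ∧ z.re ≤ 1})ᶜ from rfl, isOpen_compl_iff]
  have : ({z : ℂ | z.im = 0 ∧ -1 ≤ z.re ∧ z.re ≤ 1} : Set ℂ)
      = Complex.im ⁻¹' {0} ∩ (Complex.re ⁻¹' Icc (-1) 1) := by
    ext w; simp [Set.mem_Icc, and_assoc]
  rw [this]
  exact (isClosed_singleton.preimage Complex.continuous_im).inter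
    (isClosed_Icc.preimage Complex.continuous_re)

lemma seg_mem_U {x y : ℂ} (h : ∀ t : ℝ, t ∈ Icc (0:ℝ) 1 → ((1-t) • x + t • y) ∈ U) :
    JoinedIn U x y := by
  apply JoinedIn.of_segment_subset
  rw [segment_eq_image]
  rintro w ⟨t, ht, rfl⟩
  exact h t ht

lemma hUpath : IsPathConnected U := by
  have h2 : (2:ℂ) ∈ U := by simp [U]
  have seg2i2 : JoinedIn U (2*I) 2 := by
    apply seg_mem_U
    intro t ht
    have hre : ((1-t) • (2*I) + t • (2:ℂ)).re = 2*t := by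
      simp [Complex.smul_re]; ring
    have him : ((1-t) • (2*I) + t • (2:ℂ)).im = 2*(1-t) := by
      simp [Complex.smul_im]; try ring
    simp only [U, mem_setOf_eq, not_and, not_le]
    intro h0 _
    rw [him] at h0; rw [hre]
    nlinarith [ht.2]
  rw [isPathConnected_iff]
  refine ⟨⟨2, h2⟩, ?_⟩
  have main : ∀ z ∈ U, JoinedIn U z 2 := by
    intro z hz
    rcases lt_trichotomy z.im 0 with him | him | him
    · -- lower half plane: z → -2i → 2
      have s1 : JoinedIn U z (-(2*I)) := by
        apply seg_mem_U
        intro t ht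
        have h1 : ((1-t) • z + t • (-(2*I))).im = (1-t)*z.im + t*(-2) := by
          simp [Complex.smul_im]; try ring
        simp only [U, mem_setOf_eq, not_and, not_le]
        intro h0
        exfalso
        rw [h1] at h0
        have hA : (1-t)*z.im ≤ 0 :=
          mul_nonpos_of_nonneg_of_nonpos (by linarith [ht.2]) him.le
        have ht0 : t = 0 := by linarith [ht.1]
        rw [ht0] at h0; nlinarith
      have s2 : JoinedIn U (-(2*I)) 2 := by
        apply seg_mem_U
        intro t ht
        have hre : ((1-t) • (-(2*I)) + t • (2:ℂ)).re = 2*t := by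
          simp [Complex.smul_re]; ring
        have h1 : ((1-t) • (-(2*I)) + t • (2:ℂ)).im = -2*(1-t) := by
          simp [Complex.smul_im]; try ring
        simp only [U, mem_setOf_eq, not_and, not_le]
        intro h0 _
        rw [h1] at h0; rw [hre]
        nlinarith [ht.2]
      exact s1.trans s2
    · -- real, |re| > 1
      have h' : ¬(-1 ≤ z.re ∧ z.re ≤ 1) := fun hc => hz ⟨him, hc⟩
      rcases not_and_or.mp h' with h | h
      all_goals push_neg at h
      · -- re < -1 : z → -2 → 2i → 2
        have s1 : JoinedIn U z (-2) := by
          apply seg_mem_U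
          intro t ht
          have hre : ((1-t) • z + t • (-2:ℂ)).re = (1-t)*z.re + t*(-2) := by
            simp [Complex.smul_re]
          simp only [U, mem_setOf_eq, not_and, not_le]
          intro _ hge
          exfalso
          rw [hre] at hge
          by_cases ht1 : t = 1
          · rw [ht1] at hge; norm_num at hge
          · have h1t : 0 < 1 - t := by
              rcases lt_or_eq_of_le ht.2 with h' | h'
              · linarith
              · exact absurd h' ht1
            have := mul_lt_mul_of_pos_left h h1t
            linarith [ht.1]
        have s2 : JoinedIn U (-2:ℂ) (2*I) := by
          apply seg_mem_U
          intro t ht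
          have hre : ((1-t) • (-2:ℂ) + t • (2*I)).re = -2*(1-t) := by
            simp [Complex.smul_re]; ring
          have h1 : ((1-t) • (-2:ℂ) + t • (2*I)).im = 2*t := by
            simp [Complex.smul_im]; try ring
          simp only [U, mem_setOf_eq, not_and, not_le]
          intro h0 hge
          exfalso
          rw [h1] at h0
          have ht0 : t = 0 := by linarith
          rw [hre, ht0] at hge; norm_num at hge
        exact s1.trans (s2.trans seg2i2)
      · -- 1 < re : straight segment to 2
        apply seg_mem_U
        intro t ht
        have hre : ((1-t) • z + t • (2:ℂ)).re = (1-t)*z.re + t*2 := by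
          simp [Complex.smul_re]
        simp only [U, mem_setOf_eq, not_and, not_le]
        intro _ _
        rw [hre]
        have : (1-t)*1 ≤ (1-t)*z.re :=
          mul_le_mul_of_nonneg_left h.le (by linarith [ht.2])
        nlinarith [ht.1, ht.2]
    · -- upper half plane
      have s1 : JoinedIn U z (2*I) := by
        apply seg_mem_U
        intro t ht
        have h1 : ((1-t) • z + t • (2*I)).im = (1-t)*z.im + t*2 := by
          simp [Complex.smul_im]; try ring
        simp only [U, mem_setOf_eq, not_and, not_le]
        intro h0
        exfalso
        rw [h1] at h0
        have hA : 0 ≤ (1-t)*z.im := mul_nonneg (by linarith [ht.2]) him.le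
        have ht0 : t = 0 := by linarith [ht.1]
        rw [ht0] at h0; nlinarith
      exact s1.trans seg2i2
  intro x hx y hy
  exact (main x hx).trans (main y hy).symm

lemma abs_ne_one {s : ℂ → ℂ} (hs2 : ∀ z : ℂ, z ∈ U → (s z) ^ 2 = z ^ 2 - 1) :
    ∀ z ∈ U, ‖z - s z‖ ≠ 1 := by
  intro z hz habs
  have hmul : (z - s z) * (z + s z) = 1 := by linear_combination (-1 : ℂ) * hs2 z hz
  set w := z - s z with hw
  have hw0 : w ≠ 0 := by
    intro h; rw [h] at habs; simp at habs
  have hinv : w⁻¹ = starRingEnd ℂ w := by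
    rw [Complex.inv_def, Complex.normSq_eq_norm_sq, habs]
    simp
  have h2z : 2 * z = w + starRingEnd ℂ w := by
    have : z + s z = w⁻¹ := by
      field_simp
      linear_combination hmul
    rw [← hinv]
    have : w + w⁻¹ = w + (z + s z) := by rw [this]
    rw [this, hw]; ring
  have hz_eq : z = ((w.re : ℝ) : ℂ) := by
    have := Complex.add_conj w
    rw [this] at h2z
    field_simp at h2z
    push_cast at h2z; linear_combination h2z / 2
  apply hz
  rw [hz_eq]
  have hb : |w.re| ≤ 1 := by rw [← habs]; exact Complex.abs_re_le_norm w
  refine ⟨by simp, ?_, ?_⟩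
  · simp only [Complex.ofReal_re]
    linarith [(abs_le.mp hb).1]
  · simp only [Complex.ofReal_re]
    linarith [(abs_le.mp hb).2]

lemma branch_lt_one {s : ℂ → ℂ}
    (hs : DifferentiableOn ℂ s U)
    (hs2 : ∀ z : ℂ, z ∈ U → (s z) ^ 2 = z ^ 2 - 1)
    (hsinf : Filter.Tendsto (fun z => s z / z) (Bornology.cobounded ℂ) (nhds 1)) :
    ∀ z ∈ U, ‖z - s z‖ < 1 := by
  have hmul : ∀ z ∈ U, (z - s z) * (z + s z) = 1 := fun z hz => by
    linear_combination (-1 : ℂ) * hs2 z hz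
  set A := U ∩ (fun z => z - s z) ⁻¹' Metric.ball (0:ℂ) 1 with hA
  set B := U ∩ (fun z => z - s z) ⁻¹' (Metric.closedBall (0:ℂ) 1)ᶜ with hB
  have hcont : ContinuousOn (fun z => z - s z) U :=
    (continuousOn_id.sub hs.continuousOn)
  have hAopen : IsOpen A := hcont.isOpen_inter_preimage hUopen Metric.isOpen_ball
  have hBopen : IsOpen B :=
    hcont.isOpen_inter_preimage hUopen Metric.isClosed_closedBall.isOpen_compl
  have hdisj : Disjoint A B := by
    rw [Set.disjoint_iff]
    rintro x ⟨⟨-, hx1⟩, ⟨-, hx2⟩⟩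
    simp only [Set.mem_preimage, Metric.mem_ball, Metric.mem_closedBall, Set.mem_compl_iff,
      dist_zero_right] at hx1 hx2
    exact hx2 (le_of_lt hx1)
  have hsub : U ⊆ A ∪ B := by
    intro x hx
    rcases lt_trichotomy (‖x - s x‖) 1 with h | h | h
    · left; exact ⟨hx, by simpa [Complex.dist_eq] using h⟩
    · exact absurd h (abs_ne_one hs2 x hx)
    · right
      refine ⟨hx, ?_⟩
      simp only [Set.mem_preimage, Set.mem_compl_iff, Metric.mem_closedBall, dist_zero_right]
      push_neg
      exact h
  have hAne : (U ∩ A).Nonempty := by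
    have h1 : ∀ᶠ z : ℂ in Bornology.cobounded ℂ, 2 < ‖z‖ :=
      (tendsto_norm_cobounded_atTop).eventually_gt_atTop 2
    have h2 : ∀ᶠ z : ℂ in Bornology.cobounded ℂ, dist (s z / z) 1 < 1/2 :=
      Metric.tendsto_nhds.mp hsinf (1/2) (by norm_num)
    obtain ⟨z, hz1, hz2⟩ := (h1.and h2).exists
    have hz0 : z ≠ 0 := by
      intro h; rw [h] at hz1; norm_num at hz1
    have hzU : z ∈ U := by
      intro ⟨him, hre1, hre2⟩
      have : ‖z‖ ≤ 1 := by
        rw [← Complex.re_add_im z, him]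
        simp
        exact abs_le.mpr ⟨hre1, hre2⟩
      linarith
    have hbig : 1 < ‖z + s z‖ := by
      have hfac : z + s z = z * (1 + s z / z) := by field_simp
      have hd : ‖s z / z - 1‖ < 1/2 := by
        rw [dist_eq_norm] at hz2; exact hz2
      have h32 : (3:ℝ)/2 ≤ ‖1 + s z / z‖ := by
        have h1 : (1:ℂ) + s z / z = 2 - (1 - s z / z) := by ring
        have h2 := norm_sub_norm_le (2:ℂ) (1 - s z / z)
        have h3 : ‖(1:ℂ) - s z / z‖ = ‖s z / z - 1‖ := norm_sub_rev _ _
        have h4 : ‖(2:ℂ)‖ = 2 := by norm_num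
        rw [h1]; linarith
      rw [hfac, norm_mul]
      nlinarith
    have habs : ‖z - s z‖ * ‖z + s z‖ = 1 := by
      rw [← norm_mul, hmul z hzU, norm_one]
    have hlt : ‖z - s z‖ < 1 := by nlinarith [norm_nonneg (z - s z)]
    exact ⟨z, hzU, hzU, by simpa [Metric.mem_ball, Complex.dist_eq] using hlt⟩
  have := (hUpath.isConnected.isPreconnected).subset_left_of_subset_union
    hAopen hBopen hdisj hsub (by simpa using hAne)
  intro z hz
  have := this hz
  rcases this with ⟨-, h⟩
  simpa [Complex.dist_eq] using h

open Complex intervalIntegral Real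

noncomputable section

-- basic facts about the unit-disc parameter c
lemma den_ne {c : ℂ} (hc : ‖c‖ < 1) (w : ℂ) (hw : ‖w‖ = 1) : 1 - c * w ≠ 0 := by
  intro h
  have : (1:ℂ) = c * w := by linear_combination h
  have : (1:ℝ) = ‖c * w‖ := by rw [← this]; simp
  rw [norm_mul, hw, mul_one] at this
  linarith

lemma slit_mem {c : ℂ} (hc : ‖c‖ < 1) (w : ℂ) (hw : ‖w‖ = 1) :
    1 - c * w ∈ Complex.slitPlane := by
  left
  have h1 : (c * w).re ≤ ‖c * w‖ := Complex.re_le_norm (c * w)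
  rw [norm_mul, hw, mul_one] at h1
  simp only [Complex.sub_re, Complex.one_re]
  linarith

lemma cont_den {c : ℂ} (hc : ‖c‖ < 1) (e : ℝ → ℂ) (he : Continuous e)
    (hne : ∀ θ, ‖e θ‖ = 1) : Continuous fun θ : ℝ => c * e θ / (1 - c * e θ) :=
  (continuous_const.mul he).div (continuous_const.sub (continuous_const.mul he))
    (fun θ => den_ne hc (e θ) (hne θ))

lemma exp_theta_norm (θ : ℝ) : ‖Complex.exp (θ * I)‖ = 1 := by
  exact Complex.norm_exp_ofReal_mul_I θ

lemma exp_neg_theta_norm (θ : ℝ) : ‖Complex.exp (-(θ * I))‖ = 1 := by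
  rw [show -((θ:ℂ) * I) = ((-θ : ℝ) : ℂ) * I by push_cast; ring]
  exact exp_theta_norm (-θ)

-- derivative of θ ↦ exp(θ I)
lemma hasDerivAt_expI (θ : ℝ) :
    HasDerivAt (fun t : ℝ => Complex.exp (t * I)) (I * Complex.exp (θ * I)) θ := by
  have h1 : HasDerivAt (fun t : ℂ => Complex.exp (t * I)) (I * Complex.exp (θ * I)) (θ:ℂ) := by
    have := ((hasDerivAt_id ((θ:ℂ))).mul_const I).cexp
    simpa [mul_comm] using this
  exact h1.comp_ofReal

lemma hasDerivAt_expnegI (θ : ℝ) :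
    HasDerivAt (fun t : ℝ => Complex.exp (-(t * I))) (-I * Complex.exp (-(θ * I))) θ := by
  have h1 : HasDerivAt (fun t : ℂ => Complex.exp (-(t * I))) (-I * Complex.exp (-(θ*I))) (θ:ℂ) := by
    have := (((hasDerivAt_id ((θ:ℂ))).mul_const I).neg).cexp
    simpa [mul_comm] using this
  exact h1.comp_ofReal

-- key FTC lemma
lemma intA {c : ℂ} (hc : ‖c‖ < 1) :
    ∫ θ in (-π)..π, c * Complex.exp (θ * I) / (1 - c * Complex.exp (θ * I)) = 0 := by
  have hF : ∀ θ : ℝ, HasDerivAt (fun t : ℝ => I * Complex.log (1 - c * Complex.exp (t * I)))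
      (c * Complex.exp (θ * I) / (1 - c * Complex.exp (θ * I))) θ := by
    intro θ
    have hinner : HasDerivAt (fun t : ℝ => 1 - c * Complex.exp (t * I))
        (-(c * (I * Complex.exp (θ * I)))) θ :=
      (((hasDerivAt_expI θ).const_mul c).const_sub 1)
    have hlog := (hinner.clog_real (slit_mem hc _ (exp_theta_norm θ)))
    have := hlog.const_mul I
    refine this.congr_deriv ?_
    have hne := den_ne hc _ (exp_theta_norm θ)
    linear_combination (-(c * Complex.exp ((θ:ℂ) * I) / ((1:ℂ) - c * Complex.exp ((θ:ℂ) * I))) : ℂ) * Complex.I_sq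
  rw [intervalIntegral.integral_eq_sub_of_hasDerivAt (fun θ _ => hF θ)
      ((cont_den hc _ (Complex.continuous_exp.comp (by continuity)) exp_theta_norm).intervalIntegrable _ _)]
  have h1 : Complex.exp ((π:ℝ) * I) = -1 := by
    push_cast; exact Complex.exp_pi_mul_I
  have h2 : Complex.exp ((-π:ℝ) * I) = -1 := by
    push_cast
    rw [show -(π:ℂ) * I = -(π * I) by ring, Complex.exp_neg, Complex.exp_pi_mul_I]
    norm_num
  rw [h1, h2]
  ring

lemma intB {c : ℂ} (hc : ‖c‖ < 1) :
    ∫ θ in (-π)..π, c * Complex.exp (-(θ * I)) / (1 - c * Complex.exp (-(θ * I))) = 0 := by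
  have := intervalIntegral.integral_comp_neg
    (a := -π) (b := π) (fun θ : ℝ => c * Complex.exp (θ * I) / (1 - c * Complex.exp (θ * I)))
  rw [neg_neg] at this
  rw [← intA hc, ← this]
  apply intervalIntegral.integral_congr
  intro θ _
  simp [Complex.ofReal_neg]

lemma intC : (∫ _ in (-π)..π, (1:ℂ)) = 2 * π := by
  simp
  push_cast
  ring

lemma intE {k : ℕ} (hk : k ≠ 0) :
    ∫ θ in (-π)..π, (Complex.exp (θ * I)) ^ k = 0 := by
  have h1 : ∀ θ : ℝ, (Complex.exp (θ * I)) ^ k = Complex.exp ((k * I) * θ) := by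
    intro θ
    rw [← Complex.exp_nat_mul]
    ring_nf
  rw [intervalIntegral.integral_congr (fun θ _ => h1 θ)]
  rw [integral_exp_mul_complex (by simp [hk, Complex.I_ne_zero])]
  have e1 : Complex.exp ((k * I) * (π:ℝ)) = (-1) ^ k := by
    rw [show ((k:ℂ) * I) * (π:ℝ) = k * ((π:ℝ) * I) by push_cast; ring,
      Complex.exp_nat_mul]
    congr 1
    push_cast
    exact Complex.exp_pi_mul_I
  have e2 : Complex.exp ((k * I) * ((-π:ℝ):ℂ)) = (-1) ^ k := by
    rw [show ((k:ℂ) * I) * ((-π:ℝ):ℂ) = k * (-((π:ℝ) * I)) by push_cast; ring,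
      Complex.exp_nat_mul]
    congr 1
    rw [Complex.exp_neg]
    push_cast
    rw [Complex.exp_pi_mul_I]
    norm_num
  rw [e1, e2]
  ring

variable {z q : ℂ}

lemma hq0 (hq2 : q ^ 2 - 2 * z * q + 1 = 0) : q ≠ 0 := by
  intro h; rw [h] at hq2; norm_num at hq2

lemma hq2ne (hqlt : ‖q‖ < 1) : q ^ 2 ≠ 1 := by
  intro h
  have : ‖q ^ 2‖ = 1 := by rw [h]; simp
  rw [norm_pow] at this
  nlinarith [norm_nonneg q, hqlt]

lemma hzq (hq2 : q ^ 2 - 2 * z * q + 1 = 0) (hqlt : ‖q‖ < 1) : z - q ≠ 0 := by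
  intro h
  have h2 : 2 * q * (z - q) = 1 - q ^ 2 := by linear_combination (-1:ℂ) * hq2
  rw [h] at h2
  simp at h2
  exact hq2ne hqlt (by linear_combination (1:ℂ) * h2)

lemma hef (θ : ℝ) : Complex.exp (θ * I) * Complex.exp (-(θ * I)) = 1 := by
  rw [← Complex.exp_add]; simp

lemma cos_exp (θ : ℝ) :
    Complex.cos θ = (Complex.exp (θ * I) + Complex.exp (-(θ * I))) / 2 := by
  rw [Complex.cos]
  ring_nf

lemma hcosfact (hq2 : q ^ 2 - 2 * z * q + 1 = 0) (θ : ℝ) :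
    (1 - q * Complex.exp (θ * I)) * (1 - q * Complex.exp (-(θ * I)))
      = 2 * q * (z - Complex.cos θ) := by
  rw [cos_exp]
  linear_combination (1:ℂ) * hq2 + q ^ 2 * hef θ

lemma hzcne (hq2 : q ^ 2 - 2 * z * q + 1 = 0) (hqlt : ‖q‖ < 1) (θ : ℝ) : z - Complex.cos θ ≠ 0 := by
  intro h
  have := hcosfact (z := z) hq2 θ
  rw [h] at this
  simp at this
  rcases this with h' | h'
  · exact den_ne hqlt _ (exp_theta_norm θ) h'
  · exact den_ne hqlt _ (exp_neg_theta_norm θ) h'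

lemma contK (hq2 : q ^ 2 - 2 * z * q + 1 = 0) (hqlt : ‖q‖ < 1) (m : ℕ) :
    Continuous fun θ : ℝ => (Complex.exp (θ * I)) ^ m / (z - Complex.cos θ) := by
  apply Continuous.div
  · exact (Complex.continuous_exp.comp (by continuity)).pow m
  · exact continuous_const.sub (Complex.continuous_cos.comp Complex.continuous_ofReal)
  · exact fun θ => hzcne hq2 hqlt θ


lemma contE (m : ℕ) : Continuous fun θ : ℝ => (Complex.exp (θ * I)) ^ m :=
  (Complex.continuous_exp.comp (by continuity)).pow m

lemma contF : Continuous fun θ : ℝ => Complex.exp (-(θ * I)) :=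
  Complex.continuous_exp.comp (by continuity)

lemma P0 {z q : ℂ} (hq2 : q ^ 2 - 2 * z * q + 1 = 0) (hqlt : ‖q‖ < 1) (θ : ℝ) :
    (1:ℂ) / (z - Complex.cos θ)
      = (z - q)⁻¹ * (1 + q * Complex.exp (θ * I) / (1 - q * Complex.exp (θ * I))
          + q * Complex.exp (-(θ * I)) / (1 - q * Complex.exp (-(θ * I)))) := by
  have d1 := den_ne hqlt _ (exp_theta_norm θ)
  have d2 := den_ne hqlt _ (exp_neg_theta_norm θ)
  have dz := hzcne hq2 hqlt θ
  have dq := hzq hq2 hqlt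
  have q0 := hq0 hq2
  have hfac := hcosfact (z := z) hq2 θ
  have he := hef θ
  have hbr : 1 + q * Complex.exp (θ * I) / (1 - q * Complex.exp (θ * I))
      + q * Complex.exp (-(θ * I)) / (1 - q * Complex.exp (-(θ * I)))
      = 2 * q * (z - q) / ((1 - q * Complex.exp (θ * I)) * (1 - q * Complex.exp (-(θ * I)))) := by
    field_simp
    linear_combination (-(q^2) : ℂ) * he + hq2
  rw [hbr, hfac]
  rw [show 2 * q * (z - q) / (2 * q * (z - Complex.cos θ))
      = (z - q) / (z - Complex.cos θ) from
    mul_div_mul_left _ _ (by exact mul_ne_zero two_ne_zero q0)]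
  field_simp

lemma P1 {z q : ℂ} (hq2 : q ^ 2 - 2 * z * q + 1 = 0) (hqlt : ‖q‖ < 1) (θ : ℝ) :
    Complex.exp (θ * I) / (z - Complex.cos θ)
      = (z - q)⁻¹ * (q⁻¹ * (q * Complex.exp (θ * I) / (1 - q * Complex.exp (θ * I)))
          + q + q * (q * Complex.exp (-(θ * I)) / (1 - q * Complex.exp (-(θ * I))))) := by
  have d1 := den_ne hqlt _ (exp_theta_norm θ)
  have d2 := den_ne hqlt _ (exp_neg_theta_norm θ)
  have dz := hzcne hq2 hqlt θ
  have dq := hzq hq2 hqlt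
  have q0 := hq0 hq2
  have hfac := hcosfact (z := z) hq2 θ
  have he := hef θ
  have hbr : q⁻¹ * (q * Complex.exp (θ * I) / (1 - q * Complex.exp (θ * I)))
      + q + q * (q * Complex.exp (-(θ * I)) / (1 - q * Complex.exp (-(θ * I))))
      = 2 * q * (z - q) * Complex.exp (θ * I)
        / ((1 - q * Complex.exp (θ * I)) * (1 - q * Complex.exp (-(θ * I)))) := by
    field_simp
    linear_combination (-q : ℂ) * he + Complex.exp ((θ:ℂ) * I) * hq2
  rw [hbr, hfac]
  rw [show 2 * q * (z - q) * Complex.exp ((θ:ℂ) * I) / (2 * q * (z - Complex.cos (θ:ℂ)))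
      = ((z - q) * Complex.exp ((θ:ℂ) * I)) / (z - Complex.cos (θ:ℂ)) by
    rw [mul_assoc]
    exact mul_div_mul_left _ _ (mul_ne_zero two_ne_zero q0)]
  field_simp

lemma Kzero {z q : ℂ} (hq2 : q ^ 2 - 2 * z * q + 1 = 0) (hqlt : ‖q‖ < 1) :
    ∫ θ in (-π)..π, (Complex.exp (θ * I)) ^ 0 / (z - Complex.cos θ)
      = 2 * π * (z - q)⁻¹ := by
  have hcongr : ∀ θ ∈ Set.uIcc (-π) π,
      (Complex.exp (θ * I)) ^ 0 / (z - Complex.cos θ)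
        = (z - q)⁻¹ * (1 + q * Complex.exp (θ * I) / (1 - q * Complex.exp (θ * I))
            + q * Complex.exp (-(θ * I)) / (1 - q * Complex.exp (-(θ * I)))) := by
    intro θ _
    rw [pow_zero]
    exact P0 hq2 hqlt θ
  rw [intervalIntegral.integral_congr hcongr, intervalIntegral.integral_const_mul]
  have i1 : IntervalIntegrable (fun _ : ℝ => (1:ℂ)) MeasureTheory.volume (-π) π :=
    intervalIntegrable_const
  have i2 : IntervalIntegrable
      (fun θ : ℝ => q * Complex.exp (θ * I) / (1 - q * Complex.exp (θ * I)))
      MeasureTheory.volume (-π) π :=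
    (cont_den hqlt _ (Complex.continuous_exp.comp (by continuity)) exp_theta_norm).intervalIntegrable _ _
  have i3 : IntervalIntegrable
      (fun θ : ℝ => q * Complex.exp (-(θ * I)) / (1 - q * Complex.exp (-(θ * I))))
      MeasureTheory.volume (-π) π :=
    (cont_den hqlt _ contF exp_neg_theta_norm).intervalIntegrable _ _
  rw [intervalIntegral.integral_add (i1.add i2) i3, intervalIntegral.integral_add i1 i2]
  rw [intC, intA hqlt, intB hqlt]
  ring

lemma Kone {z q : ℂ} (hq2 : q ^ 2 - 2 * z * q + 1 = 0) (hqlt : ‖q‖ < 1) :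
    ∫ θ in (-π)..π, (Complex.exp (θ * I)) ^ 1 / (z - Complex.cos θ)
      = 2 * π * q * (z - q)⁻¹ := by
  have hcongr : ∀ θ ∈ Set.uIcc (-π) π,
      (Complex.exp (θ * I)) ^ 1 / (z - Complex.cos θ)
        = (z - q)⁻¹ * (q⁻¹ * (q * Complex.exp (θ * I) / (1 - q * Complex.exp (θ * I)))
            + q + q * (q * Complex.exp (-(θ * I)) / (1 - q * Complex.exp (-(θ * I))))) := by
    intro θ _
    rw [pow_one]
    exact P1 hq2 hqlt θ
  rw [intervalIntegral.integral_congr hcongr, intervalIntegral.integral_const_mul]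
  have i2 : IntervalIntegrable
      (fun θ : ℝ => q⁻¹ * (q * Complex.exp (θ * I) / (1 - q * Complex.exp (θ * I))))
      MeasureTheory.volume (-π) π :=
    (continuous_const.mul (cont_den hqlt _ (Complex.continuous_exp.comp (by continuity)) exp_theta_norm)).intervalIntegrable _ _
  have i3 : IntervalIntegrable
      (fun θ : ℝ => q * (q * Complex.exp (-(θ * I)) / (1 - q * Complex.exp (-(θ * I)))))
      MeasureTheory.volume (-π) π :=
    (continuous_const.mul (cont_den hqlt _ contF exp_neg_theta_norm)).intervalIntegrable _ _
  rw [intervalIntegral.integral_add (i2.add intervalIntegrable_const) i3,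
    intervalIntegral.integral_add i2 intervalIntegrable_const]
  rw [intervalIntegral.integral_const_mul, intervalIntegral.integral_const_mul,
    intA hqlt, intB hqlt, intervalIntegral.integral_const]
  rw [Complex.real_smul]
  push_cast
  ring

lemma Kform {z q : ℂ} (hq2 : q ^ 2 - 2 * z * q + 1 = 0) (hqlt : ‖q‖ < 1) (m : ℕ) :
    ∫ θ in (-π)..π, (Complex.exp (θ * I)) ^ m / (z - Complex.cos θ)
      = 2 * π * q ^ m * (z - q)⁻¹ := by
  induction m using Nat.twoStepInduction with
  | zero => simpa using Kzero hq2 hqlt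
  | one => simpa using Kone hq2 hqlt
  | more m ih1 ih2 =>
    have hpt : ∀ θ ∈ Set.uIcc (-π) π,
        (Complex.exp (θ * I)) ^ (m + 2) / (z - Complex.cos θ)
          = 2 * z * ((Complex.exp (θ * I)) ^ (m + 1) / (z - Complex.cos θ))
            - (Complex.exp (θ * I)) ^ m / (z - Complex.cos θ)
            - 2 * (Complex.exp (θ * I)) ^ (m + 1) := by
      intro θ _
      have dz := hzcne hq2 hqlt θ
      have he := hef θ
      have hc := cos_exp θ
      field_simp
      linear_combination (-(Complex.exp ((θ:ℂ) * I) ^ m) : ℂ) * he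
        - 2 * Complex.exp ((θ:ℂ) * I) ^ (m+1) * hc
    rw [intervalIntegral.integral_congr hpt]
    have iK : ∀ k : ℕ, IntervalIntegrable
        (fun θ : ℝ => (Complex.exp (θ * I)) ^ k / (z - Complex.cos θ))
        MeasureTheory.volume (-π) π :=
      fun k => (contK hq2 hqlt k).intervalIntegrable _ _
    have iE : IntervalIntegrable (fun θ : ℝ => 2 * (Complex.exp (θ * I)) ^ (m+1))
        MeasureTheory.volume (-π) π := (continuous_const.mul (contE (m+1))).intervalIntegrable _ _
    rw [intervalIntegral.integral_sub (((iK (m+1)).const_mul (2*z)).sub (iK m)) iE,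
      intervalIntegral.integral_sub ((iK (m+1)).const_mul (2*z)) (iK m),
      intervalIntegral.integral_const_mul, intervalIntegral.integral_const_mul,
      ih1, ih2, intE (Nat.succ_ne_zero m)]
    linear_combination (-2 * (π:ℂ) * q ^ m * (z - q)⁻¹) * hq2

lemma cos_exp' (w : ℂ) :
    Complex.cos w = (Complex.exp (w * I) + Complex.exp (-(w * I))) / 2 := by
  rw [Complex.cos]
  ring_nf

lemma Jform {z q : ℂ} (hq2 : q ^ 2 - 2 * z * q + 1 = 0) (hqlt : ‖q‖ < 1) (n : ℕ) :
    ∫ θ in (0:ℝ)..π, Complex.cos (n * θ) / (z - Complex.cos θ)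
      = π * q ^ n * (z - q)⁻¹ := by
  set f : ℝ → ℂ := fun θ => Complex.cos (n * θ) / (z - Complex.cos θ) with hf
  have hcontf : Continuous f := by
    apply Continuous.div
    · exact Complex.continuous_cos.comp (by continuity)
    · exact continuous_const.sub (Complex.continuous_cos.comp Complex.continuous_ofReal)
    · exact fun θ => hzcne hq2 hqlt θ
  have heven : ∀ θ : ℝ, f (-θ) = f θ := by
    intro θ
    simp only [hf]
    push_cast
    rw [show (n : ℂ) * (-θ) = -(n * θ) by ring, Complex.cos_neg, Complex.cos_neg]
  have hhalf : ∫ θ in (-π)..(0:ℝ), f θ = ∫ θ in (0:ℝ)..π, f θ := by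
    have := intervalIntegral.integral_comp_neg (a := (0:ℝ)) (b := π) f
    rw [neg_zero] at this
    rw [← this]
    apply intervalIntegral.integral_congr
    intro θ _
    exact heven θ
  have hsplit : ∫ θ in (-π)..π, f θ = 2 * ∫ θ in (0:ℝ)..π, f θ := by
    rw [← intervalIntegral.integral_add_adjacent_intervals
      (hcontf.intervalIntegrable (-π) 0) (hcontf.intervalIntegrable 0 π), hhalf]
    ring
  -- reflected K integral
  have hKneg : ∫ θ in (-π)..π, (Complex.exp (-(θ * I))) ^ n / (z - Complex.cos θ)
      = 2 * π * q ^ n * (z - q)⁻¹ := by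
    rw [← Kform hq2 hqlt n]
    have := intervalIntegral.integral_comp_neg (a := -π) (b := π)
      (fun θ : ℝ => (Complex.exp (θ * I)) ^ n / (z - Complex.cos θ))
    rw [neg_neg] at this
    rw [← this]
    apply intervalIntegral.integral_congr
    intro θ _
    push_cast
    rw [show (-(θ:ℂ)) * I = -((θ:ℂ) * I) by ring, Complex.cos_neg]
  have hptf : ∀ θ ∈ Set.uIcc (-π) π, f θ
      = ((Complex.exp (θ * I)) ^ n / (z - Complex.cos θ)
        + (Complex.exp (-(θ * I))) ^ n / (z - Complex.cos θ)) / 2 := by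
    intro θ _
    simp only [hf]
    rw [cos_exp' ((n : ℂ) * θ)]
    rw [show ((n:ℂ) * θ) * I = n * ((θ:ℂ) * I) by ring, Complex.exp_nat_mul]
    rw [show -((n:ℂ) * ((θ:ℂ) * I)) = n * (-((θ:ℂ) * I)) by ring, Complex.exp_nat_mul]
    ring
  have hful : ∫ θ in (-π)..π, f θ = 2 * π * q ^ n * (z - q)⁻¹ := by
    rw [intervalIntegral.integral_congr hptf]
    have iK : IntervalIntegrable
        (fun θ : ℝ => (Complex.exp (θ * I)) ^ n / (z - Complex.cos θ))
        MeasureTheory.volume (-π) π := (contK hq2 hqlt n).intervalIntegrable _ _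
    have iK' : IntervalIntegrable
        (fun θ : ℝ => (Complex.exp (-(θ * I))) ^ n / (z - Complex.cos θ))
        MeasureTheory.volume (-π) π := by
      apply Continuous.intervalIntegrable
      apply Continuous.div
      · exact (Complex.continuous_exp.comp (by continuity)).pow n
      · exact continuous_const.sub (Complex.continuous_cos.comp Complex.continuous_ofReal)
      · exact fun θ => hzcne hq2 hqlt θ
    calc ∫ θ in (-π)..π, ((Complex.exp (θ * I)) ^ n / (z - Complex.cos θ)
          + (Complex.exp (-(θ * I))) ^ n / (z - Complex.cos θ)) / 2
        = (∫ θ in (-π)..π, ((Complex.exp (θ * I)) ^ n / (z - Complex.cos θ)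
          + (Complex.exp (-(θ * I))) ^ n / (z - Complex.cos θ))) / 2 := by
          rw [intervalIntegral.integral_div]
      _ = ((2 * π * q ^ n * (z - q)⁻¹) + (2 * π * q ^ n * (z - q)⁻¹)) / 2 := by
          rw [intervalIntegral.integral_add iK iK', Kform hq2 hqlt n, hKneg]
      _ = 2 * π * q ^ n * (z - q)⁻¹ := by ring
  have h := hsplit.symm.trans hful
  linear_combination h / 2

lemma cos_img : Real.cos '' (Set.Ioo 0 π) = Set.Ioo (-1:ℝ) 1 := by
  ext x
  constructor
  · rintro ⟨θ, hθ, rfl⟩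
    constructor
    · have h := Real.strictAntiOn_cos (Set.mem_Icc.mpr ⟨hθ.1.le, hθ.2.le⟩)
        (Set.mem_Icc.mpr ⟨Real.pi_pos.le, le_refl π⟩) hθ.2
      rwa [Real.cos_pi] at h
    · have h := Real.strictAntiOn_cos (Set.mem_Icc.mpr ⟨le_refl 0, Real.pi_pos.le⟩)
        (Set.mem_Icc.mpr ⟨hθ.1.le, hθ.2.le⟩) hθ.1
      rwa [Real.cos_zero] at h
  · intro hx
    refine ⟨Real.arccos x, ⟨Real.arccos_pos.mpr hx.2, ?_⟩,
      Real.cos_arccos hx.1.le hx.2.le⟩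
    rcases lt_or_eq_of_le (Real.arccos_le_pi x) with h | h
    · exact h
    · exfalso
      have := Real.cos_arccos hx.1.le hx.2.le
      rw [h, Real.cos_pi] at this
      linarith [hx.1]

lemma subst_lemma (z : ℂ) (hz : ∀ θ : ℝ, z - Complex.cos θ ≠ 0) (n : ℕ) :
    ∫ x in (-1:ℝ)..1,
        (Polynomial.Chebyshev.T ℂ (n : ℤ)).eval (x : ℂ)
          / ((z - (x : ℂ)) * (Real.sqrt (1 - x ^ 2) : ℂ))
      = ∫ θ in (0:ℝ)..π, Complex.cos (n * θ) / (z - Complex.cos θ) := by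
  set g : ℝ → ℂ := fun x =>
    (Polynomial.Chebyshev.T ℂ (n : ℤ)).eval (x : ℂ)
      / ((z - (x : ℂ)) * (Real.sqrt (1 - x ^ 2) : ℂ)) with hg
  have h1 : ∫ x in (-1:ℝ)..1, g x = ∫ x in Set.Ioo (-1:ℝ) 1, g x := by
    rw [intervalIntegral.integral_of_le (by norm_num), MeasureTheory.integral_Ioc_eq_integral_Ioo]
  have hderiv : ∀ θ ∈ Set.Ioo 0 π,
      HasDerivWithinAt Real.cos (-Real.sin θ) (Set.Ioo 0 π) θ :=
    fun θ _ => (Real.hasDerivAt_cos θ).hasDerivWithinAt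
  have hinj : Set.InjOn Real.cos (Set.Ioo 0 π) :=
    Real.strictAntiOn_cos.injOn.mono (fun θ hθ => Set.mem_Icc.mpr ⟨hθ.1.le, hθ.2.le⟩)
  have h2 : ∫ x in Set.Ioo (-1:ℝ) 1, g x
      = ∫ θ in Set.Ioo 0 π, |(-Real.sin θ)| • g (Real.cos θ) := by
    rw [← cos_img]
    exact MeasureTheory.integral_image_eq_integral_abs_deriv_smul measurableSet_Ioo hderiv hinj g
  have h3 : ∫ θ in Set.Ioo 0 π, |(-Real.sin θ)| • g (Real.cos θ)
      = ∫ θ in Set.Ioo 0 π, Complex.cos (n * θ) / (z - Complex.cos θ) := by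
    apply MeasureTheory.setIntegral_congr_fun measurableSet_Ioo
    intro θ hθ
    have hsin : 0 < Real.sin θ := Real.sin_pos_of_pos_of_lt_pi hθ.1 hθ.2
    have hTeval : (Polynomial.Chebyshev.T ℂ (n : ℤ)).eval ((Real.cos θ : ℝ) : ℂ)
        = Complex.cos (n * θ) := by
      rw [Complex.ofReal_cos]
      rw [Polynomial.Chebyshev.T_complex_cos]
      push_cast
      ring_nf
    have hsqrt : Real.sqrt (1 - Real.cos θ ^ 2) = Real.sin θ := by
      rw [← Real.sin_sq, Real.sqrt_sq hsin.le]
    have hs0 : ((Real.sin θ : ℝ) : ℂ) ≠ 0 := by exact_mod_cast hsin.ne'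
    simp only [hg]
    rw [hTeval, hsqrt, abs_neg, abs_of_pos hsin, Complex.real_smul, Complex.ofReal_cos]
    have hs1 : Complex.sin (θ:ℂ) ≠ 0 := by
      rw [← Complex.ofReal_sin]; exact_mod_cast hs0
    field_simp [hz θ]
  have h4 : ∫ θ in Set.Ioo 0 π, Complex.cos (n * θ) / (z - Complex.cos θ)
      = ∫ θ in (0:ℝ)..π, Complex.cos (n * θ) / (z - Complex.cos θ) := by
    rw [intervalIntegral.integral_of_le Real.pi_pos.le, MeasureTheory.integral_Ioc_eq_integral_Ioo]
  rw [h1, h2, h3, h4]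

/-- For the Chebyshev polynomials of the first kind `T_n`
(`T_n(cos θ) = cos (n θ)`, Mathlib's `Polynomial.Chebyshev.T`), every `z ∈ ℂ \ [−1,1]`
and every `n ≥ 0`:
`∫_{−1}^{1} T_n(x) / ((z−x) √(1−x²)) dx = π / (√(z²−1) (z + √(z²−1))^n)`,
where `s = √(·²−1)` is the branch holomorphic on `ℂ \ [−1,1]` with `s(z)/z → 1` as
`z → ∞` (so that `Φ(z) = z + s(z)` is the inverse of the Joukowski map). -/
theorem stmt_17
    (s : ℂ → ℂ)
    (hs : DifferentiableOn ℂ s {z : ℂ | ¬(z.im = 0 ∧ -1 ≤ z.re ∧ z.re ≤ 1)})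
    (hs2 : ∀ z : ℂ, ¬(z.im = 0 ∧ -1 ≤ z.re ∧ z.re ≤ 1) → (s z) ^ 2 = z ^ 2 - 1)
    (hsinf : Filter.Tendsto (fun z => s z / z) (Bornology.cobounded ℂ) (nhds 1))
    (n : ℕ) :
    ∀ z : ℂ, ¬(z.im = 0 ∧ -1 ≤ z.re ∧ z.re ≤ 1) →
      ∫ x in (-1 : ℝ)..1,
          (Polynomial.Chebyshev.T ℂ (n : ℤ)).eval (x : ℂ)
            / ((z - (x : ℂ)) * (Real.sqrt (1 - x ^ 2) : ℂ))
        = (Real.pi : ℂ) / (s z * (z + s z) ^ n) := by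
  intro z hz
  have hzU : z ∈ U := hz
  have hqlt : ‖z - s z‖ < 1 := by
    have := branch_lt_one (s := s) hs (fun w hw => hs2 w hw) hsinf z hzU
    exact this
  have hq2 : (z - s z) ^ 2 - 2 * z * (z - s z) + 1 = 0 := by
    linear_combination hs2 z hz
  have hzq' : z - (z - s z) = s z := by ring
  have hcne : ∀ θ : ℝ, z - Complex.cos θ ≠ 0 := hzcne hq2 hqlt
  rw [subst_lemma z hcne n, Jform hq2 hqlt n, hzq']
  have hs0 : s z ≠ 0 := by
    intro h
    have h1 : (z - 1) * (z + 1) = 0 := by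
      have := hs2 z hz
      rw [h] at this
      linear_combination -this
    rcases mul_eq_zero.mp h1 with h2 | h2
    · have hz1 : z = 1 := by linear_combination h2
      apply hz
      rw [hz1]
      norm_num
    · have hz1 : z = -1 := by linear_combination h2
      apply hz
      rw [hz1]
      norm_num
  have hp : (z - s z) * (z + s z) = 1 := by linear_combination (-1:ℂ) * hs2 z hz
  have hpn : (z - s z) ^ n * (z + s z) ^ n = 1 := by rw [← mul_pow, hp, one_pow]
  have hpne : z + s z ≠ 0 := by
    intro h
    rw [h, mul_zero] at hp
    exact one_ne_zero hp.symm
  have hpne2 : (z + s z) ^ n ≠ 0 := pow_ne_zero n hpne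
  field_simp
  linear_combination hpn
end
end
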